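/- arXiv:2603.14599 — 5 statements merged into one kernel-verified Lean document; each statement's English description precedes it below -/
import Mathlib

section
/- Let G₁, G₂ be countable groups, π: G₁ → G₂ an epimorphism, and μ, {μ_k} probability measures on G₁ with finite Shannon entropy such that μ_k → μ pointwise and H(μ_k) → H(μ). Then π_*μ_k → π_*μ pointwise on G₂ and H(π_*μ_k) → H(π_*μ). -/
open Real Filter
open scoped ENNReal Classical

noncomputable section

/-- A probability mass function on a countable set, as a real-valued function. -/
def IsPMF {G : Type*} (μ : G → ℝ) : Prop := (∀ g, 0 ≤ μ g) ∧ ∑' g, μ g = 1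

/-- Convolution of two measures on a group. -/
def conv {G : Type*} [Group G] (μ ν : G → ℝ) : G → ℝ := fun g => ∑' h : G, μ h * ν (h⁻¹ * g)

/-- `n`-fold convolution power, with `μ^{*0} = δ_e`. -/
def convPow {G : Type*} [Group G] (μ : G → ℝ) : ℕ → G → ℝ
  | 0 => fun g => if g = 1 then 1 else 0
  | n + 1 => conv (convPow μ n) μ

/-- Shannon entropy of a measure on a countable set. -/
def Hent {G : Type*} (μ : G → ℝ) : ℝ := ∑' g : G, Real.negMulLog (μ g)

/-- Position of the random walk after `m` steps, given the first `n` increments. -/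
def walkProd {G : Type*} [Monoid G] {n : ℕ} (g : Fin n → G) (m : ℕ) : G :=
  ((List.ofFn g).take m).prod

/-- The escape probability of the `μ`-random walk: the probability of never
returning to the identity at any positive time, expressed as the infimum of the
finite-time non-return probabilities. -/
def pesc {G : Type*} [Group G] (μ : G → ℝ) : ℝ :=
  ⨅ n : ℕ, ∑' g : Fin n → G,
    if ∀ m, 1 ≤ m → m ≤ n → walkProd g m ≠ 1 then ∏ i, μ (g i) else 0

/-- Pushforward of a measure through a map. -/
def pushf {G₁ G₂ : Type*} (pr : G₁ → G₂) (μ : G₁ → ℝ) : G₂ → ℝ :=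
  fun h => ∑' g : {g : G₁ // pr g = h}, μ (g : G₁)

/-! ### Auxiliary lemmas -/

lemma isPMF_summable {G : Type*} {μ : G → ℝ} (hμ : IsPMF μ) : Summable μ := by
  by_contra h
  have := tsum_eq_zero_of_not_summable h
  rw [hμ.2] at this; norm_num at this

lemma isPMF_le_one {G : Type*} {μ : G → ℝ} (hμ : IsPMF μ) (g : G) : μ g ≤ 1 := by
  rw [← hμ.2]
  exact Summable.le_tsum (isPMF_summable hμ) g (fun g' _ => hμ.1 g')

lemma tsum_subtype_le_full {G : Type*} {f : G → ℝ} (hf0 : ∀ g, 0 ≤ f g) (hf : Summable f)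
    (s : Set G) : (∑' x : s, f x) ≤ ∑' x, f x := by
  rw [tsum_subtype]
  exact Summable.tsum_le_tsum (fun g => Set.indicator_le_self' (fun g _ => hf0 g) g)
    (hf.indicator s) hf

section helpers
variable {G₁ G₂ : Type*} {pr : G₁ → G₂}

/-- The fibers of a map partition its domain. -/
def fiberEquiv (pr : G₁ → G₂) : (Σ h : G₂, {g : G₁ // pr g = h}) ≃ G₁ where
  toFun p := p.2
  invFun g := ⟨pr g, g, rfl⟩
  left_inv := by rintro ⟨h, g, rfl⟩; rfl
  right_inv g := rfl

lemma summable_sigma_fiber {ν : G₁ → ℝ} (hν : Summable ν) :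
    Summable (fun p : Σ h : G₂, {g : G₁ // pr g = h} => ν p.2) :=
  ((fiberEquiv pr).summable_iff).2 hν

lemma pushf_summable {ν : G₁ → ℝ} (hν : Summable ν) : Summable (pushf pr ν) :=
  (summable_sigma_fiber hν).sigma' (fun _ => hν.subtype _)

lemma pushf_tsum {ν : G₁ → ℝ} (hν : Summable ν) : ∑' h, pushf pr ν h = ∑' g, ν g := by
  have h1 : ∑' p : (Σ h : G₂, {g : G₁ // pr g = h}), ν p.2 = ∑' h, pushf pr ν h :=
    Summable.tsum_sigma' (fun _ => hν.subtype _) (summable_sigma_fiber hν)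
  rw [← h1]
  exact (fiberEquiv pr).tsum_eq ν

lemma pushf_nonneg {ν : G₁ → ℝ} (hν : ∀ g, 0 ≤ ν g) (h : G₂) : 0 ≤ pushf pr ν h :=
  tsum_nonneg (fun g => hν g)

lemma isPMF_pushf {ν : G₁ → ℝ} (hν : IsPMF ν) : IsPMF (pushf pr ν) :=
  ⟨pushf_nonneg hν.1, by rw [pushf_tsum (isPMF_summable hν)]; exact hν.2⟩

/-- Subadditivity of `negMulLog` over a fiber. -/
lemma negMulLog_pushf_le {ν : G₁ → ℝ} (hν : IsPMF ν)
    (hsum : Summable (fun g => negMulLog (ν g))) (h : G₂) :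
    negMulLog (pushf pr ν h) ≤ ∑' g : {g : G₁ // pr g = h}, negMulLog (ν g) := by
  have hνs := isPMF_summable hν
  have hfib : Summable (fun g : {g : G₁ // pr g = h} => ν g) := hνs.subtype _
  have hRHS0 : 0 ≤ ∑' g : {g : G₁ // pr g = h}, negMulLog (ν g) :=
    tsum_nonneg (fun g => negMulLog_nonneg (hν.1 g) (isPMF_le_one hν g))
  set s := pushf pr ν h with hs
  have hs0 : 0 ≤ s := pushf_nonneg hν.1 h
  rcases eq_or_lt_of_le hs0 with h0 | hpos
  · rw [← h0]; simpa using hRHS0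
  · have hterm : ∀ g : {g : G₁ // pr g = h}, ν g * (-Real.log s) ≤ negMulLog (ν g) := by
      intro g
      rcases eq_or_lt_of_le (hν.1 g) with h0 | hg
      · simp [← h0]
      · have hgs : ν g ≤ s := Summable.le_tsum hfib g (fun g' _ => hν.1 g')
        have : Real.log (ν g) ≤ Real.log s := Real.log_le_log hg hgs
        have := mul_le_mul_of_nonneg_left (neg_le_neg this) (hν.1 g)
        simpa [negMulLog, mul_comm] using this
    have hsum_lhs : Summable (fun g : {g : G₁ // pr g = h} => ν g * (-Real.log s)) :=
      hfib.mul_right _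
    have hsum_rhs : Summable (fun g : {g : G₁ // pr g = h} => negMulLog (ν g)) :=
      hsum.subtype _
    have hle := Summable.tsum_le_tsum hterm hsum_lhs hsum_rhs
    calc negMulLog s = (∑' g : {g : G₁ // pr g = h}, ν g) * (-Real.log s) := by
          have : (∑' g : {g : G₁ // pr g = h}, ν g) = s := rfl
          rw [this, negMulLog]; ring
      _ = ∑' g : {g : G₁ // pr g = h}, ν g * (-Real.log s) := (tsum_mul_right).symm
      _ ≤ _ := hle

/-- tail bound of a pushed-forward entropy by the tail of the original -/
lemma tail_pushf_le {e : G₁ → ℝ} (he0 : ∀ g, 0 ≤ e g) (he : Summable e)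
    (F₁ : Finset G₁) {Ek : G₂ → ℝ} (hEkS : Summable Ek)
    (hEk_le : ∀ h, Ek h ≤ ∑' g : {g : G₁ // pr g = h}, e g) :
    (∑' h : {h : G₂ // h ∉ F₁.image pr}, Ek h) ≤ ∑' g : {g : G₁ // g ∉ F₁}, e g := by
  classical
  set S : Set G₂ := {h | h ∉ F₁.image pr} with hS
  set e' : G₁ → ℝ := (pr ⁻¹' S).indicator e with he'
  have he'0 : ∀ g, 0 ≤ e' g := fun g => Set.indicator_apply_nonneg (fun _ => he0 g)
  have he'S : Summable e' := he.indicator _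
  have hfib : ∀ h : G₂, h ∈ S → (∑' g : {g : G₁ // pr g = h}, e g) = pushf pr e' h := by
    intro h hh
    refine tsum_congr fun g => ?_
    have hg : (g : G₁) ∈ pr ⁻¹' S := by
      rw [Set.mem_preimage, g.2]; exact hh
    rw [he', Set.indicator_of_mem hg]
  have hsub : pr ⁻¹' S ⊆ {g : G₁ | g ∉ F₁} := by
    intro g hg hgF
    exact hg (Finset.mem_image_of_mem pr hgF)
  calc (∑' h : {h : G₂ // h ∉ F₁.image pr}, Ek h)
      ≤ ∑' h : {h : G₂ // h ∉ F₁.image pr}, pushf pr e' h := by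
        refine Summable.tsum_le_tsum (fun h => ?_) (hEkS.subtype _) ((pushf_summable he'S).subtype _)
        exact (hEk_le h).trans_eq (hfib h h.2)
    _ ≤ ∑' h, pushf pr e' h :=
        tsum_subtype_le_full (pushf_nonneg he'0) (pushf_summable he'S) _
    _ = ∑' g, e' g := pushf_tsum he'S
    _ ≤ ∑' g, ({g : G₁ | g ∉ F₁}).indicator e g := by
        refine Summable.tsum_le_tsum (fun g => ?_) he'S (he.indicator _)
        exact Set.indicator_le_indicator_apply_of_subset hsub (he0 g)
    _ = ∑' g : {g : G₁ // g ∉ F₁}, e g := (tsum_subtype _ _).symm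

end helpers

/-- Scheffé's lemma for countable sums. -/
lemma scheffe {G : Type*} {f : G → ℝ} {fk : ℕ → G → ℝ}
    (hf0 : ∀ g, 0 ≤ f g) (hfk0 : ∀ k g, 0 ≤ fk k g)
    (hsf : Summable f) (hsfk : ∀ k, Summable (fk k))
    (hpt : ∀ g, Tendsto (fun k => fk k g) atTop (nhds (f g)))
    (hsum : Tendsto (fun k => ∑' g, fk k g) atTop (nhds (∑' g, f g))) :
    Tendsto (fun k => ∑' g, |fk k g - f g|) atTop (nhds 0) := by
  have hminS : ∀ k, Summable (fun g => min (fk k g) (f g)) := fun k =>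
    hsf.of_nonneg_of_le (fun g => le_min (hfk0 k g) (hf0 g)) (fun g => min_le_right _ _)
  have hmin : Tendsto (fun k => ∑' g, min (fk k g) (f g)) atTop (nhds (∑' g, f g)) := by
    have := tendsto_tsum_of_dominated_convergence (𝓕 := atTop)
      (f := fun k g => min (fk k g) (f g)) (g := f) (bound := f) hsf
      (fun g => by simpa using (hpt g).min (tendsto_const_nhds (x := f g)))
      (Eventually.of_forall fun k => fun g => by
        rw [Real.norm_eq_abs, abs_of_nonneg (le_min (hfk0 k g) (hf0 g))]
        exact min_le_right _ _)
    simpa using this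
  have key : ∀ k, ∑' g, |fk k g - f g|
      = ((∑' g, fk k g) + (∑' g, f g)) - 2 * ∑' g, min (fk k g) (f g) := by
    intro k
    have habs : ∀ g, |fk k g - f g| = (fk k g + f g) - 2 * min (fk k g) (f g) := by
      intro g
      rcases le_total (fk k g) (f g) with h | h
      · rw [abs_of_nonpos (by linarith), min_eq_left h]; ring
      · rw [abs_of_nonneg (by linarith), min_eq_right h]; ring
    calc ∑' g, |fk k g - f g|
        = ∑' g, ((fk k g + f g) - 2 * min (fk k g) (f g)) := tsum_congr habs
      _ = (∑' g, (fk k g + f g)) - ∑' g, 2 * min (fk k g) (f g) :=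
          Summable.tsum_sub ((hsfk k).add hsf) ((hminS k).mul_left 2)
      _ = ((∑' g, fk k g) + (∑' g, f g)) - 2 * ∑' g, min (fk k g) (f g) := by
          rw [Summable.tsum_add (hsfk k) hsf, tsum_mul_left]
  simp only [key]
  have h2 : Tendsto (fun k => ((∑' g, fk k g) + (∑' g, f g)) - 2 * ∑' g, min (fk k g) (f g))
      atTop (nhds (((∑' g, f g) + (∑' g, f g)) - 2 * (∑' g, f g))) :=
    ((hsum.add tendsto_const_nhds).sub (hmin.const_mul 2))
  have h0 : ((∑' g, f g) + (∑' g, f g)) - 2 * (∑' g, f g) = 0 := by ring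
  rwa [h0] at h2

/-- Uniform tail smallness for an ℓ¹-convergent sequence of nonnegative functions. -/
lemma unif_tail {G : Type*} {e : G → ℝ} {ek : ℕ → G → ℝ}
    (he0 : ∀ g, 0 ≤ e g) (hek0 : ∀ k g, 0 ≤ ek k g)
    (hse : Summable e) (hsek : ∀ k, Summable (ek k))
    (hl1 : Tendsto (fun k => ∑' g, |ek k g - e g|) atTop (nhds 0))
    {ε : ℝ} (hε : 0 < ε) :
    ∃ F : Finset G, (∑' g : {g : G // g ∉ F}, e g) < ε / 2 ∧
      ∀ k, (∑' g : {g : G // g ∉ F}, ek k g) < ε := by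
  obtain ⟨K, hK⟩ := Metric.tendsto_atTop.1 hl1 (ε / 2) (by linarith)
  have hte : ∀ᶠ F : Finset G in atTop, (∑' g : {g : G // g ∉ F}, e g) < ε / 2 :=
    (tendsto_order.1 (tendsto_tsum_compl_atTop_zero e)).2 _ (by linarith)
  have htk : ∀ᶠ F : Finset G in atTop,
      ∀ i ∈ Finset.range K, (∑' g : {g : G // g ∉ F}, ek i g) < ε :=
    (eventually_all_finset _).2 fun i _ =>
      (tendsto_order.1 (tendsto_tsum_compl_atTop_zero (ek i))).2 _ hε
  obtain ⟨F, h1, h2⟩ := (hte.and htk).exists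
  refine ⟨F, h1, fun k => ?_⟩
  by_cases hk : k < K
  · exact h2 k (Finset.mem_range.2 hk)
  · have hd := hK k (le_of_not_gt hk)
    rw [Real.dist_eq, sub_zero,
      abs_of_nonneg (tsum_nonneg fun g => abs_nonneg _)] at hd
    have habs : Summable (fun g => |ek k g - e g|) := ((hsek k).sub hse).abs
    calc (∑' g : {g : G // g ∉ F}, ek k g)
        ≤ ∑' g : {g : G // g ∉ F}, (e g + |ek k g - e g|) := by
          refine Summable.tsum_le_tsum (fun g => ?_) ((hsek k).subtype _) ((hse.add habs).subtype _)
          have := le_abs_self (ek k (g : G) - e g)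
          linarith
      _ = (∑' g : {g : G // g ∉ F}, e g) + ∑' g : {g : G // g ∉ F}, |ek k g - e g| :=
          Summable.tsum_add (hse.subtype _) (habs.subtype _)
      _ ≤ (∑' g : {g : G // g ∉ F}, e g) + ∑' g, |ek k g - e g| := by
          have h3 : (∑' g : {g : G // g ∉ F}, |ek k (g : G) - e g|)
              ≤ ∑' g, |ek k g - e g| :=
            tsum_subtype_le_full (fun g => abs_nonneg (ek k g - e g)) habs {g : G | g ∉ F}
          linarith
      _ < ε / 2 + ε / 2 := by exact add_lt_add h1 hd
      _ = ε := by ring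

/-- Pointwise convergence together with convergence of finite Shannon entropies is
preserved under pushforward through a surjective homomorphism. -/
theorem stmt3 {G₁ G₂ : Type*} [Group G₁] [Group G₂] [Countable G₁] [Countable G₂]
    (pr : G₁ →* G₂) (hsurj : Function.Surjective pr) (μ : G₁ → ℝ) (μk : ℕ → G₁ → ℝ)
    (hμ : IsPMF μ) (hμk : ∀ k, IsPMF (μk k))
    (hHμ : Summable (fun g => Real.negMulLog (μ g)))
    (hHμk : ∀ k, Summable (fun g => Real.negMulLog (μk k g)))
    (hconv : ∀ g : G₁, Tendsto (fun k => μk k g) atTop (nhds (μ g)))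
    (hHconv : Tendsto (fun k => Hent (μk k)) atTop (nhds (Hent μ))) :
    (∀ h : G₂, Tendsto (fun k => pushf pr (μk k) h) atTop (nhds (pushf pr μ h))) ∧
      Tendsto (fun k => Hent (pushf pr (μk k))) atTop (nhds (Hent (pushf pr μ))) := by
  have hμS : Summable μ := isPMF_summable hμ
  have hμkS : ∀ k, Summable (μk k) := fun k => isPMF_summable (hμk k)
  -- total variation convergence (Scheffé)
  have hl1 : Tendsto (fun k => ∑' g, |μk k g - μ g|) atTop (nhds 0) := by
    refine scheffe hμ.1 (fun k => (hμk k).1) hμS hμkS hconv ?_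
    have hconst : (fun k => ∑' g, μk k g) = fun _ => (1 : ℝ) := funext fun k => (hμk k).2
    rw [hconst, hμ.2]
    exact tendsto_const_nhds
  -- Part 1 : pointwise convergence of pushforwards
  have part1 : ∀ h : G₂, Tendsto (fun k => pushf pr (μk k) h) atTop (nhds (pushf pr μ h)) := by
    intro h
    rw [tendsto_iff_norm_sub_tendsto_zero]
    have hb : ∀ k, ‖pushf pr (μk k) h - pushf pr μ h‖ ≤ ∑' g, |μk k g - μ g| := by
      intro k
      have hdiff : pushf pr (μk k) h - pushf pr μ h
          = ∑' g : {g : G₁ // pr g = h}, (μk k g - μ g) :=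
        (Summable.tsum_sub ((hμkS k).subtype _) (hμS.subtype _)).symm
      rw [hdiff]
      have habs : Summable (fun g => |μk k g - μ g|) := ((hμkS k).sub hμS).abs
      calc ‖∑' g : {g : G₁ // pr g = h}, (μk k g - μ g)‖
          ≤ ∑' g : {g : G₁ // pr g = h}, ‖μk k (g : G₁) - μ g‖ :=
            norm_tsum_le_tsum_norm (habs.subtype _)
        _ ≤ ∑' g, |μk k g - μ g| := by
            simp only [Real.norm_eq_abs]; exact
              tsum_subtype_le_full (fun g => abs_nonneg (μk k g - μ g)) habs
                {g : G₁ | pr g = h}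
    exact squeeze_zero (fun k => norm_nonneg _) hb hl1
  refine ⟨part1, ?_⟩
  -- Part 2 : entropy convergence
  set e : G₁ → ℝ := fun g => negMulLog (μ g) with he
  set ek : ℕ → G₁ → ℝ := fun k g => negMulLog (μk k g) with hek
  have he0 : ∀ g, 0 ≤ e g := fun g => negMulLog_nonneg (hμ.1 g) (isPMF_le_one hμ g)
  have hek0 : ∀ k g, 0 ≤ ek k g := fun k g =>
    negMulLog_nonneg ((hμk k).1 g) (isPMF_le_one (hμk k) g)
  have hept : ∀ g, Tendsto (fun k => ek k g) atTop (nhds (e g)) := fun g =>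
    (Real.continuous_negMulLog.tendsto _).comp (hconv g)
  have hl1e : Tendsto (fun k => ∑' g, |ek k g - e g|) atTop (nhds 0) :=
    scheffe he0 hek0 hHμ hHμk hept hHconv
  -- entropies of pushforwards
  set E : ℕ → G₂ → ℝ := fun k h => negMulLog (pushf pr (μk k) h) with hE
  set Einf : G₂ → ℝ := fun h => negMulLog (pushf pr μ h) with hEinf
  have hE0 : ∀ k h, 0 ≤ E k h := fun k h =>
    negMulLog_nonneg (pushf_nonneg (hμk k).1 h) (isPMF_le_one (isPMF_pushf (hμk k)) h)
  have hEinf0 : ∀ h, 0 ≤ Einf h := fun h =>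
    negMulLog_nonneg (pushf_nonneg hμ.1 h) (isPMF_le_one (isPMF_pushf hμ) h)
  have hEle : ∀ k h, E k h ≤ ∑' g : {g : G₁ // pr g = h}, ek k g := fun k h =>
    negMulLog_pushf_le (hμk k) (hHμk k) h
  have hEinfle : ∀ h, Einf h ≤ ∑' g : {g : G₁ // pr g = h}, e g := fun h =>
    negMulLog_pushf_le hμ hHμ h
  have hES : ∀ k, Summable (E k) := fun k =>
    Summable.of_nonneg_of_le (hE0 k) (hEle k) (pushf_summable (hHμk k))
  have hEinfS : Summable Einf :=
    Summable.of_nonneg_of_le hEinf0 hEinfle (pushf_summable hHμ)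
  have hEpt : ∀ h, Tendsto (fun k => E k h) atTop (nhds (Einf h)) := fun h =>
    (Real.continuous_negMulLog.tendsto _).comp (part1 h)
  rw [Metric.tendsto_atTop]
  intro ε hε
  obtain ⟨F₁, htail_e, htail_ek⟩ := unif_tail he0 hek0 hHμ hHμk hl1e
    (show (0:ℝ) < ε / 4 by linarith)
  set F₂ : Finset G₂ := F₁.image pr with hF₂
  have htailEinf : (∑' h : {h : G₂ // h ∉ F₂}, Einf h) < ε / 4 :=
    lt_of_le_of_lt (tail_pushf_le he0 hHμ F₁ hEinfS hEinfle) (by linarith)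
  have htailE : ∀ k, (∑' h : {h : G₂ // h ∉ F₂}, E k h) < ε / 4 := fun k =>
    lt_of_le_of_lt (tail_pushf_le (hek0 k) (hHμk k) F₁ (hES k) (hEle k)) (htail_ek k)
  have hfin : Tendsto (fun k => ∑ h ∈ F₂, E k h) atTop (nhds (∑ h ∈ F₂, Einf h)) :=
    tendsto_finset_sum _ (fun h _ => hEpt h)
  obtain ⟨N, hN⟩ := Metric.tendsto_atTop.1 hfin (ε / 4) (by linarith)
  refine ⟨N, fun k hk => ?_⟩
  have hHk : Hent (pushf pr (μk k)) = ∑ h ∈ F₂, E k h + ∑' h : {h : G₂ // h ∉ F₂}, E k h :=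
    (Summable.sum_add_tsum_subtype_compl (hES k) F₂).symm
  have hH : Hent (pushf pr μ) = ∑ h ∈ F₂, Einf h + ∑' h : {h : G₂ // h ∉ F₂}, Einf h :=
    (Summable.sum_add_tsum_subtype_compl hEinfS F₂).symm
  rw [Real.dist_eq, hHk, hH]
  have h1 := hN k hk
  rw [Real.dist_eq] at h1
  have ht1 : (0:ℝ) ≤ ∑' h : {h : G₂ // h ∉ F₂}, E k h := tsum_nonneg fun h => hE0 k h
  have ht2 : (0:ℝ) ≤ ∑' h : {h : G₂ // h ∉ F₂}, Einf h := tsum_nonneg fun h => hEinf0 h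
  have ht3 := htailE k
  have ht4 := htailEinf
  calc |(∑ h ∈ F₂, E k h + ∑' h : {h : G₂ // h ∉ F₂}, E k h)
        - (∑ h ∈ F₂, Einf h + ∑' h : {h : G₂ // h ∉ F₂}, Einf h)|
      ≤ |∑ h ∈ F₂, E k h - ∑ h ∈ F₂, Einf h|
        + |(∑' h : {h : G₂ // h ∉ F₂}, E k h) - ∑' h : {h : G₂ // h ∉ F₂}, Einf h| := by
        have heq : (∑ h ∈ F₂, E k h + ∑' h : {h : G₂ // h ∉ F₂}, E k h)
            - (∑ h ∈ F₂, Einf h + ∑' h : {h : G₂ // h ∉ F₂}, Einf h)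
            = (∑ h ∈ F₂, E k h - ∑ h ∈ F₂, Einf h)
              + ((∑' h : {h : G₂ // h ∉ F₂}, E k h) - ∑' h : {h : G₂ // h ∉ F₂}, Einf h) := by
          ring
        rw [heq]
        exact abs_add_le _ _
    _ < ε := by
        have habs2 : |(∑' h : {h : G₂ // h ∉ F₂}, E k h)
            - ∑' h : {h : G₂ // h ∉ F₂}, Einf h| < ε / 4 :=
          abs_sub_lt_iff.2 ⟨by linarith, by linarith⟩
        linarith
end
end

section
/- Let {μ_k} be a sequence of probability measures on a countable group G, each with finite Shannon entropy, converging pointwise to μ with H(μ) < ∞ and H(μ_k) → H(μ). If for every ε > 0 there is a finite set F ⊆ G with ∑_{x∉F} −μ_k(x) log μ_k(x) < ε for all k (entropy-tightness), and π: G → Q is a surjective group homomorphism to a countable group Q, then the sequence of pushforwards {π_*μ_k} is entropy-tight on Q. -/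
open Real Filter
open scoped ENNReal Classical

noncomputable section

/-- Entropy-tightness of a sequence of probability measures is preserved under
pushforward through a surjective homomorphism. -/
theorem stmt4 {G Q : Type*} [Group G] [Group Q] [Countable G] [Countable Q]
    (pr : G →* Q) (hsurj : Function.Surjective pr) (μ : G → ℝ) (μk : ℕ → G → ℝ)
    (hμ : IsPMF μ) (hμk : ∀ k, IsPMF (μk k))
    (hHμ : Summable (fun g => Real.negMulLog (μ g)))
    (hHμk : ∀ k, Summable (fun g => Real.negMulLog (μk k g)))
    (hconv : ∀ g : G, Tendsto (fun k => μk k g) atTop (nhds (μ g)))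
    (hHconv : Tendsto (fun k => Hent (μk k)) atTop (nhds (Hent μ)))
    (htight : ∀ ε > (0 : ℝ), ∃ F : Finset G,
      ∀ k, ∑' g : {g : G // g ∉ F}, Real.negMulLog (μk k (g : G)) < ε) :
    ∀ ε > (0 : ℝ), ∃ F' : Finset Q,
      ∀ k, ∑' q : {q : Q // q ∉ F'}, Real.negMulLog (pushf pr (μk k) (q : Q)) < ε := by

  intro ε hε
  obtain ⟨F, hF⟩ := htight ε hε
  refine ⟨F.image pr, fun k => ?_⟩
  set ν := μk k with hνdef
  obtain ⟨hν0, hν1⟩ := hμk k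
  have hsum : Summable ν := by
    by_contra h
    rw [tsum_eq_zero_of_not_summable h] at hν1
    norm_num at hν1
  have hνle1 : ∀ g, ν g ≤ 1 := fun g => hν1 ▸ Summable.le_tsum hsum g (fun j _ => hν0 j)
  have hnn : ∀ g, 0 ≤ Real.negMulLog (ν g) := fun g =>
    Real.negMulLog_nonneg (hν0 g) (hνle1 g)
  have hS : Summable (fun g => Real.negMulLog (ν g)) := hHμk k
  have hfib : ∀ q : Q, Summable (fun g : {g : G // pr g = q} => ν (g : G)) :=
    fun q => hsum.subtype _
  have hp0 : ∀ q, 0 ≤ pushf pr ν q := fun q => tsum_nonneg (fun g => hν0 _)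
  -- key per-fiber inequality
  have key : ∀ q : Q, Real.negMulLog (pushf pr ν q) ≤
      ∑' g : {g : G // pr g = q}, Real.negMulLog (ν (g : G)) := by
    intro q
    rcases eq_or_lt_of_le (hp0 q) with h0 | h0
    · rw [← h0]
      simpa using tsum_nonneg (fun g : {g : G // pr g = q} => hnn (g : G))
    · have hνlep : ∀ g : {g : G // pr g = q}, ν (g : G) ≤ pushf pr ν q :=
        fun g => Summable.le_tsum (hfib q) g (fun j _ => hν0 (j : G))
      have hpdef : (∑' g : {g : G // pr g = q}, ν (g : G)) = pushf pr ν q := rfl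
      have hrw : Real.negMulLog (pushf pr ν q) =
          ∑' g : {g : G // pr g = q}, (-Real.log (pushf pr ν q)) * ν (g : G) := by
        rw [tsum_mul_left, hpdef, Real.negMulLog]
        ring
      rw [hrw]
      refine Summable.tsum_le_tsum ?_ ((hfib q).mul_left _) (hS.subtype _)
      intro g
      rcases eq_or_lt_of_le (hν0 (g : G)) with hg0 | hg0
      · have hz : ν (g : G) = 0 := hg0.symm
        simp [hz, Real.negMulLog]
      · have hlog : Real.log (ν (g : G)) ≤ Real.log (pushf pr ν q) :=
          Real.log_le_log hg0 (hνlep g)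
        have := mul_le_mul_of_nonneg_right (neg_le_neg hlog) (hν0 (g : G))
        rw [Real.negMulLog]
        nlinarith
  -- the sigma decomposition over fibers
  set F' : Finset Q := F.image pr with hF'
  have hsubS : Summable (fun g : {g : G // pr g ∉ F'} => Real.negMulLog (ν (g : G))) :=
    hS.subtype _
  let e : {g : G // pr g ∉ F'} ≃ Σ q : {q : Q // q ∉ F'}, {g : G // pr g = (q : Q)} :=
    { toFun := fun g => ⟨⟨pr g, g.2⟩, ⟨g.1, rfl⟩⟩
      invFun := fun s => ⟨s.2.1, by rw [s.2.2]; exact s.1.2⟩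
      left_inv := fun g => rfl
      right_inv := fun ⟨⟨q, hq⟩, g, hg⟩ => by
        dsimp only at hg ⊢
        subst hg
        rfl }
  have hsigma : Summable (fun s : Σ q : {q : Q // q ∉ F'}, {g : G // pr g = (q : Q)} =>
      Real.negMulLog (ν (s.2 : G))) := e.summable_iff.mp hsubS
  have heq : (∑' q : {q : Q // q ∉ F'}, ∑' g : {g : G // pr g = (q : Q)},
        Real.negMulLog (ν (g : G))) =
      ∑' g : {g : G // pr g ∉ F'}, Real.negMulLog (ν (g : G)) := by
    rw [← Summable.tsum_sigma hsigma]
    exact (e.tsum_eq _).symm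
  have hqS : Summable (fun q : {q : Q // q ∉ F'} =>
      ∑' g : {g : G // pr g = (q : Q)}, Real.negMulLog (ν (g : G))) := hsigma.sigma
  -- comparison with the tail over F
  have hle2 : (∑' g : {g : G // pr g ∉ F'}, Real.negMulLog (ν (g : G))) ≤
      ∑' g : {g : G // g ∉ F}, Real.negMulLog (ν (g : G)) := by
    refine Summable.tsum_le_tsum_of_inj
      (fun g : {g : G // pr g ∉ F'} =>
        (⟨g.1, fun hgF => g.2 (Finset.mem_image_of_mem pr hgF)⟩ : {g : G // g ∉ F}))
      (fun a b hab => by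
        rw [Subtype.ext_iff] at hab ⊢
        exact hab)
      (fun c _ => hnn _) (fun g => le_refl _) hsubS (hS.subtype _)
  -- summability of the pushforward tail entropies
  have hpnn : ∀ q, 0 ≤ Real.negMulLog (pushf pr ν q) := by
    intro q
    refine Real.negMulLog_nonneg (hp0 q) ?_
    calc pushf pr ν q = ∑' g : {g : G // pr g = q}, ν (g : G) := rfl
      _ ≤ ∑' g, ν g := Summable.tsum_le_tsum_of_inj (Subtype.val) Subtype.val_injective
          (fun c _ => hν0 c) (fun g => le_refl _) (hfib q) hsum
      _ = 1 := hν1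
  have hLsum : Summable (fun q : {q : Q // q ∉ F'} =>
      Real.negMulLog (pushf pr ν (q : Q))) :=
    Summable.of_nonneg_of_le (fun q => hpnn _) (fun q => key _) hqS
  calc (∑' q : {q : Q // q ∉ F'}, Real.negMulLog (pushf pr ν (q : Q)))
      ≤ ∑' q : {q : Q // q ∉ F'}, ∑' g : {g : G // pr g = (q : Q)},
          Real.negMulLog (ν (g : G)) := Summable.tsum_le_tsum (fun q => key _) hLsum hqS
    _ = ∑' g : {g : G // pr g ∉ F'}, Real.negMulLog (ν (g : G)) := heq
    _ ≤ ∑' g : {g : G // g ∉ F}, Real.negMulLog (ν (g : G)) := hle2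
    _ < ε := hF k
end
end

section
/- Let G be a countable group containing a nonabelian free subgroup F₂ as a direct factor, i.e., G = F₂ × L. Let η be the uniform measure on a symmetric free generating set of F₂, and let μ, {μ_k} be probability measures on L with supports in a fixed finite set, μ_k → μ pointwise, h(μ_k) = 0 for all k, and h(μ) > 0. Set ν_k = η ⊗ μ_k and ν = η ⊗ μ. Then ν_k → ν pointwise, h(ν_k) = h(η) > 0 for all k, and lim_k h(ν_k) = h(η) < h(η) + h(μ) = h(ν). In particular asymptotic entropy can be discontinuous along sequences where all asymptotic entropies are strictly positive. -/
open Real Filter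
open scoped ENNReal Classical

noncomputable section

/-- The uniform measure on the symmetric free generating set of the free group of rank 2. -/
def etaF2 : FreeGroup (Fin 2) → ℝ := fun x =>
  if x = FreeGroup.of 0 ∨ x = FreeGroup.of 1 ∨
      x = (FreeGroup.of 0)⁻¹ ∨ x = (FreeGroup.of 1)⁻¹ then (1 : ℝ) / 4 else 0

namespace Stmt15

open FreeGroup
open scoped Pointwise

set_option linter.unusedSectionVars false

/-! ### Generic finite-support convolution lemmas -/

section Generic

variable {G : Type*} [Group G]

/-- a fixed choice of supporting sets for convolution powers -/
def suppPow (s : Finset G) : ℕ → Finset G := fun n => s ^ n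

lemma mem_suppPow_zero {s : Finset G} {g : G} : g ∈ suppPow s 0 ↔ g = 1 := by
  rw [suppPow, pow_zero]
  exact Finset.mem_one

lemma mem_suppPow_succ {s : Finset G} {a b : G} {n : ℕ} (ha : a ∈ suppPow s n) (hb : b ∈ s) :
    a * b ∈ suppPow s (n + 1) := by
  rw [suppPow] at ha ⊢
  rw [pow_succ]
  exact Finset.mul_mem_mul ha hb

lemma mem_suppPow_add {s : Finset G} {a b : G} {m n : ℕ} (ha : a ∈ suppPow s m)
    (hb : b ∈ suppPow s n) : a * b ∈ suppPow s (m + n) := by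
  rw [suppPow] at ha hb ⊢
  rw [pow_add]
  exact Finset.mul_mem_mul ha hb

lemma conv_eq_sum (p q : G → ℝ) (s : Finset G) (hp : ∀ g ∉ s, p g = 0) (g : G) :
    conv p q g = ∑ h ∈ s, p h * q (h⁻¹ * g) := by
  refine tsum_eq_sum ?_
  intro h hh
  rw [hp h hh, zero_mul]

lemma sum_perm_support (F : G → ℝ) (t S : Finset G) (hF : ∀ g ∉ t, F g = 0)
    (e : Equiv.Perm G) (he : ∀ h ∈ t, e h ∈ S) :
    ∑ g ∈ S, F (e.symm g) = ∑ g ∈ t, F g := by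
  rw [show (∑ g ∈ S, F (e.symm g)) = ∑ g ∈ S.image (fun g => e.symm g), F g from
    (Finset.sum_image (by intro a _ b _ hab; exact e.symm.injective hab)).symm]
  refine (Finset.sum_subset ?_ ?_).symm
  · intro h ht
    exact Finset.mem_image.2 ⟨e h, he h ht, e.symm_apply_apply h⟩
  · intro g _ hg; exact hF g hg

lemma sum_left_translate (F : G → ℝ) (t S : Finset G) (hF : ∀ g ∉ t, F g = 0)
    (h : G) (hh : ∀ x ∈ t, h * x ∈ S) :
    ∑ g ∈ S, F (h⁻¹ * g) = ∑ g ∈ t, F g := by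
  have := sum_perm_support F t S hF (Equiv.mulLeft h) hh
  simpa using this

lemma sum_right_translate (F : G → ℝ) (t S : Finset G) (hF : ∀ g ∉ t, F g = 0)
    (s : G) (hh : ∀ x ∈ t, x * s ∈ S) :
    ∑ g ∈ S, F (g * s⁻¹) = ∑ g ∈ t, F g := by
  have := sum_perm_support F t S hF (Equiv.mulRight s) hh
  simpa using this

lemma conv_supp (p q : G → ℝ) (s t u : Finset G) (hp : ∀ g ∉ s, p g = 0)
    (hq : ∀ g ∉ t, q g = 0) (hu : ∀ a ∈ s, ∀ b ∈ t, a * b ∈ u) :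
    ∀ g ∉ u, conv p q g = 0 := by
  intro g hg
  rw [conv_eq_sum p q s hp]
  refine Finset.sum_eq_zero fun h hh => ?_
  have : q (h⁻¹ * g) = 0 := by
    refine hq _ fun hmem => hg ?_
    have := hu h hh _ hmem
    simpa using this
  rw [this, mul_zero]

lemma conv_nonneg' (p q : G → ℝ) (hp : ∀ g, 0 ≤ p g) (hq : ∀ g, 0 ≤ q g) (g : G) :
    0 ≤ conv p q g :=
  tsum_nonneg fun h => mul_nonneg (hp h) (hq _)

lemma conv_mass (p q : G → ℝ) (s t u : Finset G) (hp : ∀ g ∉ s, p g = 0)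
    (hq : ∀ g ∉ t, q g = 0) (hu : ∀ a ∈ s, ∀ b ∈ t, a * b ∈ u)
    (hps : ∑ g ∈ s, p g = 1) (hqt : ∑ g ∈ t, q g = 1) :
    ∑ g ∈ u, conv p q g = 1 := by
  have e1 : ∀ g ∈ u, conv p q g = ∑ h ∈ s, p h * q (h⁻¹ * g) :=
    fun g _ => conv_eq_sum p q s hp g
  rw [Finset.sum_congr rfl e1, Finset.sum_comm]
  have e2 : ∀ h ∈ s, ∑ g ∈ u, p h * q (h⁻¹ * g) = p h := by
    intro h hh
    rw [← Finset.mul_sum]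
    rw [sum_left_translate q t u hq h (fun x hx => hu h hh x hx), hqt, mul_one]
  rw [Finset.sum_congr rfl e2, hps]

/-- The convolution power of a finitely-supported PMF is a finitely-supported PMF. -/
lemma convPow_bundle (p : G → ℝ) (s : Finset G) (hp0 : ∀ g, 0 ≤ p g)
    (hp : ∀ g ∉ s, p g = 0) (hps : ∑ g ∈ s, p g = 1) (n : ℕ) :
    (∀ g, 0 ≤ convPow p n g) ∧ (∀ g ∉ suppPow s n, convPow p n g = 0) ∧
      (∑ g ∈ suppPow s n, convPow p n g = 1) := by
  induction n with
  | zero =>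
    refine ⟨fun g => by dsimp [convPow]; split <;> norm_num, ?_, ?_⟩
    · intro g hg
      have : g ≠ 1 := fun e => hg (mem_suppPow_zero.mpr e)
      simp [convPow, this]
    · have : suppPow s 0 = {1} := by
        ext g
        rw [mem_suppPow_zero, Finset.mem_singleton]
      rw [this]
      simp [convPow]
  | succ n ih =>
    obtain ⟨h0, hsupp, hmass⟩ := ih
    refine ⟨fun g => conv_nonneg' _ _ h0 hp0 g, ?_, ?_⟩
    · exact conv_supp _ _ _ _ _ hsupp hp (fun a ha b hb => mem_suppPow_succ ha hb)
    · exact conv_mass _ _ _ _ _ hsupp hp (fun a ha b hb => mem_suppPow_succ ha hb) hmass hps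

lemma conv_delta (p q : G → ℝ) : conv p (convPow q 0) = p := by
  funext g
  show (∑' h : G, p h * (if h⁻¹ * g = 1 then 1 else 0)) = p g
  rw [tsum_eq_single g ?_]
  · simp
  · intro h hh
    rw [if_neg, mul_zero]
    rw [inv_mul_eq_one]
    exact hh

lemma conv_assoc (p q r : G → ℝ) (s t u : Finset G) (hp : ∀ g ∉ s, p g = 0)
    (hq : ∀ g ∉ t, q g = 0) (hu : ∀ a ∈ s, ∀ b ∈ t, a * b ∈ u) :
    conv (conv p q) r = conv p (conv q r) := by
  funext g
  rw [conv_eq_sum (conv p q) r u (conv_supp p q s t u hp hq hu) g,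
    conv_eq_sum p (conv q r) s hp g]
  have step1 : ∀ h ∈ u, conv p q h * r (h⁻¹ * g)
      = ∑ k ∈ s, p k * q (k⁻¹ * h) * r (h⁻¹ * g) := by
    intro h _
    rw [conv_eq_sum p q s hp h, Finset.sum_mul]
  rw [Finset.sum_congr rfl step1, Finset.sum_comm]
  refine Finset.sum_congr rfl fun k hk => ?_
  have hconvqr : conv q r (k⁻¹ * g) = ∑ h ∈ t, q h * r (h⁻¹ * (k⁻¹ * g)) :=
    conv_eq_sum q r t hq _
  rw [hconvqr, Finset.mul_sum]
  have key := sum_left_translate (fun h' => p k * (q h' * r (h'⁻¹ * (k⁻¹ * g)))) t u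
    (fun h' hh' => by simp [hq h' hh']) k (fun x hx => hu k hk x hx)
  rw [← key]
  refine Finset.sum_congr rfl fun h hh => ?_
  have e : (k⁻¹ * h)⁻¹ * (k⁻¹ * g) = h⁻¹ * g := by group
  rw [e]; ring

lemma convPow_add (p : G → ℝ) (s : Finset G) (hp0 : ∀ g, 0 ≤ p g)
    (hp : ∀ g ∉ s, p g = 0) (hps : ∑ g ∈ s, p g = 1) (m n : ℕ) :
    convPow p (m + n) = conv (convPow p m) (convPow p n) := by
  induction n with
  | zero => rw [Nat.add_zero, conv_delta]
  | succ n ih =>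
    have hm := (convPow_bundle p s hp0 hp hps m).2.1
    have hn := (convPow_bundle p s hp0 hp hps n).2.1
    show conv (convPow p (m + n)) p = _
    rw [ih, conv_assoc (convPow p m) (convPow p n) p (suppPow s m) (suppPow s n)
      (suppPow s (m + n)) hm hn (fun a ha b hb => mem_suppPow_add ha hb)]
    rfl

/-! ### Entropy lemmas -/

lemma negMulLog_add_le {a b : ℝ} (ha : 0 ≤ a) (hb : 0 ≤ b) :
    Real.negMulLog (a + b) ≤ Real.negMulLog a + Real.negMulLog b := by
  rcases eq_or_lt_of_le ha with h|h
  · simp [← h]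
  rcases eq_or_lt_of_le hb with h'|h'
  · simp [← h']
  have l1 : a * Real.log a ≤ a * Real.log (a+b) :=
    mul_le_mul_of_nonneg_left (Real.log_le_log h (by linarith)) ha
  have l2 : b * Real.log b ≤ b * Real.log (a+b) :=
    mul_le_mul_of_nonneg_left (Real.log_le_log h' (by linarith)) hb
  simp only [Real.negMulLog, neg_mul]
  nlinarith

lemma negMulLog_sum_le {ι : Type*} (u : Finset ι) (f : ι → ℝ) (hf : ∀ i ∈ u, 0 ≤ f i) :
    Real.negMulLog (∑ i ∈ u, f i) ≤ ∑ i ∈ u, Real.negMulLog (f i) := by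
  induction u using Finset.cons_induction with
  | empty => simp
  | cons i u hi ih =>
    rw [Finset.sum_cons, Finset.sum_cons]
    calc Real.negMulLog (f i + ∑ j ∈ u, f j)
        ≤ Real.negMulLog (f i) + Real.negMulLog (∑ j ∈ u, f j) :=
          negMulLog_add_le (hf i (Finset.mem_cons_self i u))
            (Finset.sum_nonneg fun j hj => hf j (Finset.mem_cons_of_mem hj))
      _ ≤ _ := add_le_add (le_refl _) (ih fun j hj => hf j (Finset.mem_cons_of_mem hj))

lemma Hent_eq_sum (p : G → ℝ) (s : Finset G) (hp : ∀ g ∉ s, p g = 0) :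
    Hent p = ∑ g ∈ s, Real.negMulLog (p g) := by
  refine tsum_eq_sum fun g hg => ?_
  rw [hp g hg, Real.negMulLog_zero]

lemma Hent_nonneg (p : G → ℝ) (s : Finset G) (hp0 : ∀ g, 0 ≤ p g)
    (hp : ∀ g ∉ s, p g = 0) (hps : ∑ g ∈ s, p g = 1) : 0 ≤ Hent p := by
  rw [Hent_eq_sum p s hp]
  refine Finset.sum_nonneg fun g hg => Real.negMulLog_nonneg (hp0 g) ?_
  calc p g ≤ ∑ x ∈ s, p x := Finset.single_le_sum (fun x _ => hp0 x) hg
    _ = 1 := hps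

lemma Hent_conv_le (p q : G → ℝ) (s t u : Finset G)
    (hp0 : ∀ g, 0 ≤ p g) (hq0 : ∀ g, 0 ≤ q g)
    (hp : ∀ g ∉ s, p g = 0) (hq : ∀ g ∉ t, q g = 0)
    (hu : ∀ a ∈ s, ∀ b ∈ t, a * b ∈ u)
    (hps : ∑ g ∈ s, p g = 1) (hqt : ∑ g ∈ t, q g = 1) :
    Hent (conv p q) ≤ Hent p + Hent q := by
  rw [Hent_eq_sum (conv p q) u (conv_supp p q s t u hp hq hu),
    Hent_eq_sum p s hp, Hent_eq_sum q t hq]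
  calc ∑ g ∈ u, Real.negMulLog (conv p q g)
      ≤ ∑ g ∈ u, ∑ h ∈ s, Real.negMulLog (p h * q (h⁻¹ * g)) := by
        refine Finset.sum_le_sum fun g _ => ?_
        rw [conv_eq_sum p q s hp g]
        exact negMulLog_sum_le s _ (fun h _ => mul_nonneg (hp0 h) (hq0 _))
    _ = ∑ h ∈ s, ∑ g ∈ u, (q (h⁻¹ * g) * Real.negMulLog (p h)
          + p h * Real.negMulLog (q (h⁻¹ * g))) := by
        rw [Finset.sum_comm]
        exact Finset.sum_congr rfl fun h _ => Finset.sum_congr rfl fun g _ =>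
          Real.negMulLog_mul _ _
    _ = ∑ h ∈ s, (Real.negMulLog (p h) + p h * (∑ g ∈ t, Real.negMulLog (q g))) := by
        refine Finset.sum_congr rfl fun h hh => ?_
        rw [Finset.sum_add_distrib, ← Finset.sum_mul, ← Finset.mul_sum]
        rw [sum_left_translate q t u hq h (fun x hx => hu h hh x hx), hqt, one_mul]
        congr 2
        exact sum_left_translate (fun x => Real.negMulLog (q x)) t u
          (fun x hx => by simp [hq x hx]) h (fun x hx => hu h hh x hx)
    _ = ∑ g ∈ s, Real.negMulLog (p g) + ∑ g ∈ t, Real.negMulLog (q g) := by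
        rw [Finset.sum_add_distrib, ← Finset.sum_mul, hps, one_mul]

end Generic

/-! ### Free group letter lemmas -/

section Letters

variable {α : Type*} [DecidableEq α]

lemma mk_single_inv (x : α × Bool) :
    (FreeGroup.mk [x])⁻¹ = FreeGroup.mk [(x.1, !x.2)] := by
  rw [FreeGroup.inv_mk]
  simp [FreeGroup.invRev]

lemma norm_mk_single (x : α × Bool) : norm (FreeGroup.mk [x]) = 1 := by
  show (FreeGroup.mk [x]).toWord.length = 1
  rw [FreeGroup.toWord_mk, FreeGroup.reduce_singleton]
  rfl

lemma mk_single_injective : Function.Injective (fun x : α × Bool => FreeGroup.mk [x]) := by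
  intro x y h
  have := congrArg FreeGroup.toWord h
  rw [FreeGroup.toWord_mk, FreeGroup.toWord_mk, FreeGroup.reduce_singleton,
    FreeGroup.reduce_singleton] at this
  simpa using this

lemma head_of_norm_le (x : α × Bool) (g : FreeGroup α)
    (h : norm (FreeGroup.mk [x] * g) ≤ norm g) :
    g.toWord.head? = some (x.1, !x.2) := by
  have hmul : (FreeGroup.mk [x] * g).toWord = FreeGroup.reduce (x :: g.toWord) := by
    conv_lhs => rw [← FreeGroup.mk_toWord (x := g)]
    rw [FreeGroup.mul_mk, FreeGroup.toWord_mk]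
    rfl
  have hnorm : norm (FreeGroup.mk [x] * g) = (FreeGroup.reduce (x :: g.toWord)).length := by
    rw [← hmul]; rfl
  have hng : norm g = g.toWord.length := rfl
  have hred : FreeGroup.reduce g.toWord = g.toWord := FreeGroup.reduce_toWord g
  rw [FreeGroup.reduce.cons, hred] at hnorm
  rcases hw : g.toWord with _ | ⟨y, ys⟩
  · have hg1 : g = 1 := FreeGroup.toWord_eq_nil_iff.mp hw
    rw [hg1, mul_one, norm_mk_single, FreeGroup.norm_one] at h
    omega
  · rw [hw] at hnorm hng
    dsimp only at hnorm
    by_cases hc : x.1 = y.1 ∧ x.2 = !y.2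
    · have hy : y = (x.1, !x.2) := by
        obtain ⟨h1, h2⟩ := hc
        rw [Prod.ext_iff]
        exact ⟨h1.symm, by rw [h2, Bool.not_not]⟩
      rw [List.head?_cons, hy]
    · exfalso
      rw [if_neg hc] at hnorm
      simp only [List.length_cons] at hnorm hng
      omega

lemma letters_eq_of_norm_le (g : FreeGroup α) (x y : α × Bool)
    (hx : norm (g * FreeGroup.mk [x]) ≤ norm g)
    (hy : norm (g * FreeGroup.mk [y]) ≤ norm g) : x = y := by
  have key : ∀ z : α × Bool, norm (g * FreeGroup.mk [z]) ≤ norm g →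
      (g⁻¹).toWord.head? = some z := by
    intro z hz
    have h1 : norm (FreeGroup.mk [(z.1, !z.2)] * g⁻¹) ≤ norm g⁻¹ := by
      have e : FreeGroup.mk [(z.1, !z.2)] * g⁻¹ = (g * FreeGroup.mk [z])⁻¹ := by
        rw [mul_inv_rev, mk_single_inv]
      rw [e, FreeGroup.norm_inv_eq, FreeGroup.norm_inv_eq]
      exact hz
    have := head_of_norm_le (z.1, !z.2) g⁻¹ h1
    simpa using this
  have h1 := key x hx
  have h2 := key y hy
  rw [h1] at h2
  exact Option.some_injective _ h2

lemma norm_le_norm_mul_single_add_one (g : FreeGroup α) (x : α × Bool) :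
    norm g ≤ norm (g * FreeGroup.mk [x]) + 1 := by
  have e : g = g * FreeGroup.mk [x] * (FreeGroup.mk [x])⁻¹ := by group
  calc norm g = norm (g * FreeGroup.mk [x] * (FreeGroup.mk [x])⁻¹) := by rw [← e]
    _ ≤ norm (g * FreeGroup.mk [x]) + norm (FreeGroup.mk [x])⁻¹ := FreeGroup.norm_mul_le _ _
    _ = norm (g * FreeGroup.mk [x]) + 1 := by rw [FreeGroup.norm_inv_eq, norm_mk_single]

end Letters

/-! ### The free group of rank 2 -/

section F2

def s4 : Finset (FreeGroup (Fin 2)) :=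
  (Finset.univ : Finset (Fin 2 × Bool)).image (fun x => FreeGroup.mk [x])

lemma of_eq_mk (i : Fin 2) : FreeGroup.of i = FreeGroup.mk [(i, true)] := rfl

lemma ofinv_eq_mk (i : Fin 2) : (FreeGroup.of i)⁻¹ = FreeGroup.mk [(i, false)] := by
  rw [of_eq_mk, mk_single_inv]
  rfl

lemma mem_s4_iff {g : FreeGroup (Fin 2)} :
    g ∈ s4 ↔ (g = FreeGroup.of 0 ∨ g = FreeGroup.of 1 ∨
      g = (FreeGroup.of 0)⁻¹ ∨ g = (FreeGroup.of 1)⁻¹) := by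
  constructor
  · intro h
    rw [s4, Finset.mem_image] at h
    obtain ⟨⟨i, b⟩, -, rfl⟩ := h
    fin_cases i <;> cases b
    · exact Or.inr (Or.inr (Or.inl (ofinv_eq_mk 0).symm))
    · exact Or.inl rfl
    · exact Or.inr (Or.inr (Or.inr (ofinv_eq_mk 1).symm))
    · exact Or.inr (Or.inl rfl)
  · intro h
    rw [s4, Finset.mem_image]
    rcases h with rfl|rfl|rfl|rfl
    · exact ⟨(0, true), Finset.mem_univ _, rfl⟩
    · exact ⟨(1, true), Finset.mem_univ _, rfl⟩
    · exact ⟨(0, false), Finset.mem_univ _, (ofinv_eq_mk 0).symm⟩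
    · exact ⟨(1, false), Finset.mem_univ _, (ofinv_eq_mk 1).symm⟩

lemma exists_letter {s : FreeGroup (Fin 2)} (hs : s ∈ s4) : ∃ x, s = FreeGroup.mk [x] := by
  rw [s4, Finset.mem_image] at hs
  obtain ⟨x, -, rfl⟩ := hs
  exact ⟨x, rfl⟩

lemma inv_mem_s4 {s : FreeGroup (Fin 2)} (hs : s ∈ s4) : s⁻¹ ∈ s4 := by
  obtain ⟨x, rfl⟩ := exists_letter hs
  rw [mk_single_inv, s4, Finset.mem_image]
  exact ⟨_, Finset.mem_univ _, rfl⟩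

lemma card_s4 : s4.card = 4 := by
  rw [s4, Finset.card_image_of_injective _ mk_single_injective]
  simp

lemma etaF2_nonneg (g : FreeGroup (Fin 2)) : 0 ≤ etaF2 g := by
  rw [etaF2]; split <;> norm_num

lemma etaF2_supp : ∀ g ∉ s4, etaF2 g = 0 := by
  intro g hg
  rw [etaF2]
  rw [if_neg (fun hc => hg (mem_s4_iff.mpr hc))]

lemma etaF2_mem {g : FreeGroup (Fin 2)} (hg : g ∈ s4) : etaF2 g = 1/4 := by
  rw [etaF2]
  rw [if_pos (mem_s4_iff.mp hg)]

lemma etaF2_mass : ∑ g ∈ s4, etaF2 g = 1 := by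
  rw [Finset.sum_congr rfl (fun g hg => etaF2_mem hg), Finset.sum_const, card_s4]
  norm_num

lemma conv_eta (p : FreeGroup (Fin 2) → ℝ) (g : FreeGroup (Fin 2)) :
    conv p etaF2 g = ∑ s ∈ s4, p (g * s) * (1/4) := by
  have hsupp : ∀ h ∉ s4.image (fun s => g * s), p h * etaF2 (h⁻¹ * g) = 0 := by
    intro h hh
    have : etaF2 (h⁻¹ * g) = 0 := by
      refine etaF2_supp _ fun hmem => hh ?_
      rw [Finset.mem_image]
      refine ⟨(h⁻¹ * g)⁻¹, inv_mem_s4 hmem, by group⟩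
    rw [this, mul_zero]
  show (∑' h, p h * etaF2 (h⁻¹ * g)) = _
  rw [tsum_eq_sum hsupp,
    Finset.sum_image (by intro a _ b _ hab; exact mul_left_cancel hab)]
  refine Finset.sum_congr rfl fun s hs => ?_
  have h1 : (g * s)⁻¹ * g = s⁻¹ := by group
  rw [h1, etaF2_mem (inv_mem_s4 hs)]

lemma bad_card (g : FreeGroup (Fin 2)) :
    (s4.filter fun s => norm (g * s) ≤ norm g).card ≤ 1 := by
  refine Finset.card_le_one.mpr fun a ha b hb => ?_
  rw [Finset.mem_filter] at ha hb
  obtain ⟨xa, rfl⟩ := exists_letter ha.1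
  obtain ⟨xb, rfl⟩ := exists_letter hb.1
  rw [letters_eq_of_norm_le g xa xb ha.2 hb.2]

lemma pow13 {k m : ℕ} (h : k ≤ m + 1) : (1/3:ℝ)^m ≤ 3 * (1/3:ℝ)^k := by
  have e : (1/3:ℝ)^m = 3 * (1/3)^(m+1) := by rw [pow_succ]; ring
  rw [e]
  exact mul_le_mul_of_nonneg_left
    (pow_le_pow_of_le_one (by norm_num) (by norm_num) h) (by norm_num)

lemma convPow_eta_le (n : ℕ) (g : FreeGroup (Fin 2)) :
    convPow etaF2 n g ≤ (1/3:ℝ) ^ (norm g) := by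
  induction n generalizing g with
  | zero =>
    by_cases hg : g = 1
    · subst hg
      simp [convPow, FreeGroup.norm_one]
    · simp only [convPow, if_neg hg]
      positivity
  | succ n ih =>
    show conv (convPow etaF2 n) etaF2 g ≤ _
    rw [conv_eta]
    set B := s4.filter (fun s => norm (g * s) ≤ norm g) with hB
    set t := (1/3:ℝ)^(norm g) with ht
    have htpos : 0 < t := by positivity
    have hsplit := Finset.sum_filter_add_sum_filter_not s4
      (fun s => norm (g * s) ≤ norm g) (fun s => convPow etaF2 n (g * s) * (1/4))
    rw [← hsplit]
    have hBbound : ∑ s ∈ B, convPow etaF2 n (g * s) * (1/4) ≤ B.card * (3 * t * (1/4)) := by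
      have hterm : ∀ s ∈ B, convPow etaF2 n (g * s) * (1/4) ≤ 3 * t * (1/4) := by
        intro s hs
        rw [Finset.mem_filter] at hs
        obtain ⟨x, rfl⟩ := exists_letter hs.1
        have h1 : convPow etaF2 n (g * FreeGroup.mk [x])
            ≤ (1/3:ℝ)^(norm (g * FreeGroup.mk [x])) := ih _
        have h2 : (1/3:ℝ)^(norm (g * FreeGroup.mk [x])) ≤ 3 * t := by
          rw [ht]
          exact pow13 (norm_le_norm_mul_single_add_one g x)
        linarith
      calc ∑ s ∈ B, convPow etaF2 n (g * s) * (1/4) ≤ B.card • (3 * t * (1/4)) :=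
            Finset.sum_le_card_nsmul B _ _ hterm
        _ = B.card * (3 * t * (1/4)) := by rw [nsmul_eq_mul]
    have hCbound : ∑ s ∈ s4.filter (fun s => ¬ norm (g * s) ≤ norm g),
        convPow etaF2 n (g * s) * (1/4)
        ≤ (s4.filter (fun s => ¬ norm (g * s) ≤ norm g)).card * ((1/3) * t * (1/4)) := by
      have hterm : ∀ s ∈ s4.filter (fun s => ¬ norm (g * s) ≤ norm g),
          convPow etaF2 n (g * s) * (1/4) ≤ (1/3) * t * (1/4) := by
        intro s hs
        rw [Finset.mem_filter] at hs
        have h1 : convPow etaF2 n (g * s) ≤ (1/3:ℝ)^(norm (g * s)) := ih _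
        have h2 : (1/3:ℝ)^(norm (g * s)) ≤ (1/3) * t := by
          rw [ht, ← pow_succ']
          exact pow_le_pow_of_le_one (by norm_num) (by norm_num) (by omega)
        linarith
      calc ∑ s ∈ s4.filter (fun s => ¬ norm (g * s) ≤ norm g),
            convPow etaF2 n (g * s) * (1/4)
          ≤ (s4.filter (fun s => ¬ norm (g * s) ≤ norm g)).card • ((1/3) * t * (1/4)) :=
            Finset.sum_le_card_nsmul _ _ _ hterm
        _ = _ := by rw [nsmul_eq_mul]
    have hcards := Finset.card_filter_add_card_filter_not
      (s := s4) (p := fun s => norm (g * s) ≤ norm g)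
    rw [card_s4] at hcards
    rw [← hB] at hcards
    have hBle : B.card ≤ 1 := bad_card g
    rcases Nat.le_one_iff_eq_zero_or_eq_one.mp hBle with h0 | h1
    · have hc : (s4.filter (fun s => ¬ norm (g * s) ≤ norm g)).card = 4 := by omega
      rw [h0] at hBbound
      rw [hc] at hCbound
      push_cast at hBbound hCbound
      linarith
    · have hc : (s4.filter (fun s => ¬ norm (g * s) ≤ norm g)).card = 3 := by omega
      rw [h1] at hBbound
      rw [hc] at hCbound
      push_cast at hBbound hCbound
      linarith

lemma sum_s4_inv (A : FreeGroup (Fin 2) → ℝ) : ∑ s ∈ s4, A s⁻¹ = ∑ s ∈ s4, A s := by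
  refine Finset.sum_equiv (Equiv.inv (FreeGroup (Fin 2))) (fun s => ?_) (fun s _ => rfl)
  constructor
  · exact fun h => inv_mem_s4 h
  · intro h
    have := inv_mem_s4 h
    simpa using this

lemma sum_norm_ge (h : FreeGroup (Fin 2)) :
    4 * (norm h : ℝ) + 2 ≤ ∑ s ∈ s4, (norm (h * s) : ℝ) := by
  have hsplit := Finset.sum_filter_add_sum_filter_not s4
    (fun s => norm (h * s) ≤ norm h) (fun s => (norm (h * s) : ℝ))
  rw [← hsplit]
  have hcards := Finset.card_filter_add_card_filter_not
    (s := s4) (p := fun s => norm (h * s) ≤ norm h)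
  rw [card_s4] at hcards
  have hnotbound : ∀ s ∈ s4.filter (fun s => ¬ norm (h * s) ≤ norm h),
      (norm h : ℝ) + 1 ≤ (norm (h * s) : ℝ) := by
    intro s hs
    rw [Finset.mem_filter] at hs
    exact_mod_cast Nat.add_one_le_iff.mpr (lt_of_not_ge hs.2)
  have hnot : ((s4.filter (fun s => ¬ norm (h * s) ≤ norm h)).card : ℝ) * ((norm h : ℝ) + 1)
      ≤ ∑ s ∈ s4.filter (fun s => ¬ norm (h * s) ≤ norm h), (norm (h * s) : ℝ) := by
    have := Finset.card_nsmul_le_sum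
      (s4.filter (fun s => ¬ norm (h * s) ≤ norm h)) _ _ hnotbound
    rw [nsmul_eq_mul] at this
    exact this
  rcases Nat.le_one_iff_eq_zero_or_eq_one.mp (bad_card h) with h0 | h1
  · have hc : (s4.filter (fun s => ¬ norm (h * s) ≤ norm h)).card = 4 := by omega
    rw [hc] at hnot
    have hBempty : s4.filter (fun s => norm (h * s) ≤ norm h) = ∅ :=
      Finset.card_eq_zero.mp h0
    rw [hBempty, Finset.sum_empty]
    push_cast at hnot ⊢
    linarith
  · obtain ⟨b, hb⟩ := Finset.card_eq_one.mp h1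
    have hc : (s4.filter (fun s => ¬ norm (h * s) ≤ norm h)).card = 3 := by omega
    rw [hc] at hnot
    rw [hb, Finset.sum_singleton]
    have hbmem : b ∈ s4.filter (fun s => norm (h * s) ≤ norm h) := by
      rw [hb]; exact Finset.mem_singleton_self b
    rw [Finset.mem_filter] at hbmem
    obtain ⟨x, rfl⟩ := exists_letter hbmem.1
    have hlow : (norm h : ℝ) ≤ (norm (h * FreeGroup.mk [x]) : ℝ) + 1 := by
      exact_mod_cast norm_le_norm_mul_single_add_one h x
    push_cast at hnot ⊢
    linarith

lemma drift (n : ℕ) :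
    (n : ℝ) / 2 ≤ ∑ g ∈ suppPow s4 n, convPow etaF2 n g * (norm g : ℝ) := by
  induction n with
  | zero =>
    refine le_trans (by norm_num) (Finset.sum_nonneg fun g _ => ?_)
    exact mul_nonneg ((convPow_bundle etaF2 s4 etaF2_nonneg etaF2_supp etaF2_mass 0).1 g)
      (by positivity)
  | succ n ih =>
    rw [Nat.cast_add, Nat.cast_one]
    obtain ⟨h0, hsupp, hmass⟩ := convPow_bundle etaF2 s4 etaF2_nonneg etaF2_supp etaF2_mass n
    have step1 : ∀ g ∈ suppPow s4 (n+1), convPow etaF2 (n+1) g * (norm g : ℝ)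
        = ∑ s ∈ s4, convPow etaF2 n (g * s) * (1/4) * (norm g : ℝ) := by
      intro g _
      show conv (convPow etaF2 n) etaF2 g * (norm g : ℝ) = _
      rw [conv_eta, Finset.sum_mul]
    calc ((n:ℝ)+1)/2 = (n:ℝ)/2 + 1/2 := by ring
      _ ≤ ∑ g ∈ suppPow s4 (n+1), convPow etaF2 (n+1) g * (norm g : ℝ) := ?_
    rw [Finset.sum_congr rfl step1, Finset.sum_comm]
    have step2 : ∀ s ∈ s4, ∑ g ∈ suppPow s4 (n+1),
          convPow etaF2 n (g * s) * (1/4) * (norm g : ℝ)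
        = ∑ h ∈ suppPow s4 n, convPow etaF2 n h * (1/4) * (norm (h * s⁻¹) : ℝ) := by
      intro s hs
      have key := sum_right_translate
        (fun h => convPow etaF2 n h * (1/4) * (norm (h * s⁻¹) : ℝ))
        (suppPow s4 n) (suppPow s4 (n+1))
        (fun g hg => by rw [hsupp g hg]; ring) s⁻¹
        (fun x hx => mem_suppPow_succ hx (inv_mem_s4 hs))
      simp only [inv_inv] at key
      rw [← key]
      refine Finset.sum_congr rfl fun g _ => ?_
      rw [mul_inv_cancel_right]
    have step2' : ∑ s ∈ s4, ∑ g ∈ suppPow s4 (n+1),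
          convPow etaF2 n (g * s) * (1/4) * (norm g : ℝ)
        = ∑ s ∈ s4, ∑ h ∈ suppPow s4 n, convPow etaF2 n h * (1/4) * (norm (h * s) : ℝ) := by
      rw [Finset.sum_congr rfl step2]
      exact sum_s4_inv (fun s => ∑ h ∈ suppPow s4 n,
        convPow etaF2 n h * (1/4) * (norm (h * s) : ℝ))
    rw [step2', Finset.sum_comm]
    have step3 : ∀ h ∈ suppPow s4 n,
        convPow etaF2 n h * ((norm h : ℝ) + 1/2)
          ≤ ∑ s ∈ s4, convPow etaF2 n h * (1/4) * (norm (h * s) : ℝ) := by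
      intro h _
      have e : ∑ s ∈ s4, convPow etaF2 n h * (1/4) * (norm (h * s) : ℝ)
          = convPow etaF2 n h * (1/4) * ∑ s ∈ s4, (norm (h * s) : ℝ) := by
        rw [Finset.mul_sum]
      rw [e]
      have := sum_norm_ge h
      nlinarith [h0 h]
    calc (n:ℝ)/2 + 1/2
        ≤ (∑ h ∈ suppPow s4 n, convPow etaF2 n h * (norm h : ℝ)) + 1/2 := by linarith
      _ = ∑ h ∈ suppPow s4 n, convPow etaF2 n h * ((norm h : ℝ) + 1/2) := by
          have e : ∀ h' ∈ suppPow s4 n, convPow etaF2 n h' * ((norm h' : ℝ) + 1/2)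
              = convPow etaF2 n h' * (norm h' : ℝ) + convPow etaF2 n h' * (1/2) :=
            fun h' _ => by ring
          rw [Finset.sum_congr rfl e, Finset.sum_add_distrib, ← Finset.sum_mul, hmass]
          ring
      _ ≤ _ := Finset.sum_le_sum step3

lemma Hent_eta_ge (n : ℕ) : Real.log 3 * ((n:ℝ)/2) ≤ Hent (convPow etaF2 n) := by
  obtain ⟨h0, hsupp, hmass⟩ := convPow_bundle etaF2 s4 etaF2_nonneg etaF2_supp etaF2_mass n
  rw [Hent_eq_sum _ (suppPow s4 n) hsupp]
  have hpt : ∀ g ∈ suppPow s4 n,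
      convPow etaF2 n g * ((norm g : ℝ) * Real.log 3)
        ≤ Real.negMulLog (convPow etaF2 n g) := by
    intro g _
    rcases eq_or_lt_of_le (h0 g) with he|hp
    · rw [← he]; simp
    · have hub := convPow_eta_le n g
      have hlog : Real.log (convPow etaF2 n g) ≤ Real.log ((1/3:ℝ)^(norm g)) :=
        Real.log_le_log hp hub
      rw [Real.log_pow] at hlog
      have hinv : Real.log ((1:ℝ)/3) = -Real.log 3 := by
        rw [one_div, Real.log_inv]
      rw [hinv] at hlog
      rw [Real.negMulLog, neg_mul]
      nlinarith [mul_le_mul_of_nonneg_left hlog (le_of_lt hp)]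
  calc Real.log 3 * ((n:ℝ)/2)
      ≤ Real.log 3 * ∑ g ∈ suppPow s4 n, convPow etaF2 n g * (norm g : ℝ) :=
        mul_le_mul_of_nonneg_left (drift n) (Real.log_nonneg (by norm_num))
    _ = ∑ g ∈ suppPow s4 n, convPow etaF2 n g * ((norm g : ℝ) * Real.log 3) := by
        rw [Finset.mul_sum]
        exact Finset.sum_congr rfl fun g _ => by ring
    _ ≤ _ := Finset.sum_le_sum hpt

end F2

/-! ### Fekete limit for the free group walk -/

section Fekete

lemma eta_subadd : Subadditive (fun n => Hent (convPow etaF2 n)) := by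
  intro m n
  dsimp only
  rw [convPow_add etaF2 s4 etaF2_nonneg etaF2_supp etaF2_mass m n]
  obtain ⟨a0, asupp, amass⟩ := convPow_bundle etaF2 s4 etaF2_nonneg etaF2_supp etaF2_mass m
  obtain ⟨b0, bsupp, bmass⟩ := convPow_bundle etaF2 s4 etaF2_nonneg etaF2_supp etaF2_mass n
  exact Hent_conv_le _ _ (suppPow s4 m) (suppPow s4 n) (suppPow s4 (m+n)) a0 b0 asupp bsupp
    (fun a ha b hb => mem_suppPow_add ha hb) amass bmass

lemma Hent_eta_nonneg (n : ℕ) : 0 ≤ Hent (convPow etaF2 n) := by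
  obtain ⟨h0, hsupp, hmass⟩ := convPow_bundle etaF2 s4 etaF2_nonneg etaF2_supp etaF2_mass n
  exact Hent_nonneg _ (suppPow s4 n) h0 hsupp hmass

lemma eta_bddBelow : BddBelow (Set.range fun n : ℕ => Hent (convPow etaF2 n) / n) := by
  refine ⟨0, fun x hx => ?_⟩
  obtain ⟨n, rfl⟩ := hx
  exact div_nonneg (Hent_eta_nonneg n) (Nat.cast_nonneg n)

lemma eta_tendsto :
    Tendsto (fun n : ℕ => Hent (convPow etaF2 n) / n) atTop (nhds eta_subadd.lim) :=
  eta_subadd.tendsto_lim eta_bddBelow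

lemma eta_lim_pos : 0 < eta_subadd.lim := by
  have hge : Real.log 3 / 2 ≤ eta_subadd.lim := by
    refine ge_of_tendsto eta_tendsto ?_
    filter_upwards [eventually_ge_atTop 1] with n hn
    have h1 := Hent_eta_ge n
    have hnpos : (0:ℝ) < n := by exact_mod_cast hn
    have e : Real.log 3 / 2 = (Real.log 3 * ((n:ℝ)/2)) / n := by
      field_simp
    rw [e]
    exact div_le_div_of_nonneg_right h1 hnpos.le
  have : (0:ℝ) < Real.log 3 / 2 := by
    have := Real.log_pos (by norm_num : (1:ℝ) < 3)
    linarith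
  linarith

end Fekete

/-! ### Products -/

section Prod

variable {G L : Type*} [Group G] [Group L]

lemma prod_supp (a : G → ℝ) (b : L → ℝ) (sa : Finset G) (sb : Finset L)
    (ha : ∀ g ∉ sa, a g = 0) (hb : ∀ g ∉ sb, b g = 0) :
    ∀ h ∉ sa ×ˢ sb, a h.1 * b h.2 = 0 := by
  intro h hh
  rw [Finset.mem_product] at hh
  by_cases h1 : h.1 ∈ sa
  · have h2 : h.2 ∉ sb := fun h2 => hh ⟨h1, h2⟩
    rw [hb _ h2, mul_zero]
  · rw [ha _ h1, zero_mul]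

lemma conv_prodFun (a c : G → ℝ) (b d : L → ℝ) (sa : Finset G) (sb : Finset L)
    (ha : ∀ g ∉ sa, a g = 0) (hb : ∀ g ∉ sb, b g = 0) :
    conv (fun y : G × L => a y.1 * b y.2) (fun y : G × L => c y.1 * d y.2)
      = fun x : G × L => conv a c x.1 * conv b d x.2 := by
  funext x
  rw [conv_eq_sum _ _ (sa ×ˢ sb) (prod_supp a b sa sb ha hb) x]
  rw [conv_eq_sum a c sa ha, conv_eq_sum b d sb hb, Finset.sum_mul_sum,
    Finset.sum_product]
  refine Finset.sum_congr rfl fun h1 _ => Finset.sum_congr rfl fun h2 _ => ?_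
  have e1 : ((h1, h2)⁻¹ * x).1 = h1⁻¹ * x.1 := rfl
  have e2 : ((h1, h2)⁻¹ * x).2 = h2⁻¹ * x.2 := rfl
  rw [e1, e2]
  ring

lemma convPow_prodFun (a : G → ℝ) (b : L → ℝ) (sa : Finset G) (sb : Finset L)
    (ha0 : ∀ g, 0 ≤ a g) (hb0 : ∀ g, 0 ≤ b g)
    (ha : ∀ g ∉ sa, a g = 0) (hb : ∀ g ∉ sb, b g = 0)
    (hma : ∑ g ∈ sa, a g = 1) (hmb : ∑ g ∈ sb, b g = 1) (n : ℕ) :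
    convPow (fun y : G × L => a y.1 * b y.2) n
      = fun x : G × L => convPow a n x.1 * convPow b n x.2 := by
  induction n with
  | zero =>
    funext x
    simp only [convPow]
    by_cases h1 : x.1 = 1 <;> by_cases h2 : x.2 = 1 <;>
      simp [Prod.ext_iff, h1, h2]
  | succ n ih =>
    show conv (convPow (fun y : G × L => a y.1 * b y.2) n) _ = _
    rw [ih]
    exact conv_prodFun (convPow a n) a (convPow b n) b (suppPow sa n) (suppPow sb n)
      (convPow_bundle a sa ha0 ha hma n).2.1 (convPow_bundle b sb hb0 hb hmb n).2.1

lemma Hent_prodFun (a : G → ℝ) (b : L → ℝ) (sa : Finset G) (sb : Finset L)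
    (ha : ∀ g ∉ sa, a g = 0) (hb : ∀ g ∉ sb, b g = 0)
    (hma : ∑ g ∈ sa, a g = 1) (hmb : ∑ g ∈ sb, b g = 1) :
    Hent (fun y : G × L => a y.1 * b y.2) = Hent a + Hent b := by
  have hsupp : ∀ h ∉ sa ×ˢ sb, Real.negMulLog (a h.1 * b h.2) = 0 := by
    intro h hh
    rw [prod_supp a b sa sb ha hb h hh, Real.negMulLog_zero]
  rw [show Hent (fun y : G × L => a y.1 * b y.2)
      = ∑ h ∈ sa ×ˢ sb, Real.negMulLog (a h.1 * b h.2) from tsum_eq_sum hsupp,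
    Hent_eq_sum a sa ha, Hent_eq_sum b sb hb, Finset.sum_product]
  have e1 : ∀ h1 ∈ sa, ∑ h2 ∈ sb, Real.negMulLog (a h1 * b h2)
      = Real.negMulLog (a h1) + a h1 * ∑ h2 ∈ sb, Real.negMulLog (b h2) := by
    intro h1 _
    have : ∀ h2 ∈ sb, Real.negMulLog (a h1 * b h2)
        = b h2 * Real.negMulLog (a h1) + a h1 * Real.negMulLog (b h2) :=
      fun h2 _ => Real.negMulLog_mul _ _
    rw [Finset.sum_congr rfl this, Finset.sum_add_distrib, ← Finset.sum_mul,
      ← Finset.mul_sum, hmb, one_mul]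
  rw [Finset.sum_congr rfl e1, Finset.sum_add_distrib, ← Finset.sum_mul, hma, one_mul]

end Prod

end Stmt15

open Stmt15 in
/-- Discontinuity of asymptotic entropy with all asymptotic entropies strictly
positive: taking the product with a free group of rank 2 of a discontinuity
example where h(μ_k) = 0 and h(μ) > 0. -/
theorem stmt15 {L : Type*} [Group L] [Countable L]
    (μ : L → ℝ) (μk : ℕ → L → ℝ) (hμ : IsPMF μ) (hμk : ∀ k, IsPMF (μk k))
    (F : Finset L) (hFμ : ∀ g, μ g ≠ 0 → g ∈ F) (hFμk : ∀ k g, μk k g ≠ 0 → g ∈ F)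
    (hconv : ∀ g, Tendsto (fun k => μk k g) atTop (nhds (μ g)))
    (hzero : ∀ k, Tendsto (fun n : ℕ => Hent (convPow (μk k) n) / n) atTop (nhds 0))
    (hμent : ℝ) (hμpos : 0 < hμent)
    (hμlim : Tendsto (fun n : ℕ => Hent (convPow μ n) / n) atTop (nhds hμent))
    (ν : FreeGroup (Fin 2) × L → ℝ) (hν : ∀ p, ν p = etaF2 p.1 * μ p.2)
    (νk : ℕ → FreeGroup (Fin 2) × L → ℝ) (hνk : ∀ k p, νk k p = etaF2 p.1 * μk k p.2) :
    (∀ p, Tendsto (fun k => νk k p) atTop (nhds (ν p))) ∧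
    ∃ hη : ℝ, 0 < hη ∧
      Tendsto (fun n : ℕ => Hent (convPow etaF2 n) / n) atTop (nhds hη) ∧
      (∀ k, Tendsto (fun n : ℕ => Hent (convPow (νk k) n) / n) atTop (nhds hη)) ∧
      Tendsto (fun n : ℕ => Hent (convPow ν n) / n) atTop (nhds (hη + hμent)) := by
  have hμ0 : ∀ g, 0 ≤ μ g := hμ.1
  have hμsupp : ∀ g ∉ F, μ g = 0 := fun g hg => by
    by_contra h
    exact hg (hFμ g h)
  have hμmass : ∑ g ∈ F, μ g = 1 := by
    rw [← tsum_eq_sum (L := SummationFilter.unconditional L) hμsupp]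
    exact hμ.2
  have hμk0 : ∀ k g, 0 ≤ μk k g := fun k => (hμk k).1
  have hμksupp : ∀ k, ∀ g ∉ F, μk k g = 0 := fun k g hg => by
    by_contra h
    exact hg (hFμk k g h)
  have hμkmass : ∀ k, ∑ g ∈ F, μk k g = 1 := fun k => by
    rw [← tsum_eq_sum (L := SummationFilter.unconditional L) (hμksupp k)]
    exact (hμk k).2
  have hνfun : ν = fun p : FreeGroup (Fin 2) × L => etaF2 p.1 * μ p.2 := funext hν
  have hνkfun : ∀ k, νk k = fun p : FreeGroup (Fin 2) × L => etaF2 p.1 * μk k p.2 :=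
    fun k => funext (hνk k)
  constructor
  · intro p
    rw [hν p]
    simp only [hνk]
    exact (hconv p.2).const_mul (etaF2 p.1)
  refine ⟨eta_subadd.lim, eta_lim_pos, eta_tendsto, ?_, ?_⟩
  · intro k
    have hsplit : ∀ n : ℕ, Hent (convPow (νk k) n)
        = Hent (convPow etaF2 n) + Hent (convPow (μk k) n) := by
      intro n
      rw [hνkfun k, convPow_prodFun etaF2 (μk k) s4 F etaF2_nonneg (hμk0 k)
        etaF2_supp (hμksupp k) etaF2_mass (hμkmass k) n]
      obtain ⟨a0, asupp, amass⟩ :=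
        convPow_bundle etaF2 s4 etaF2_nonneg etaF2_supp etaF2_mass n
      obtain ⟨b0, bsupp, bmass⟩ :=
        convPow_bundle (μk k) F (hμk0 k) (hμksupp k) (hμkmass k) n
      exact Hent_prodFun _ _ _ _ asupp bsupp amass bmass
    have hT := eta_tendsto.add (hzero k)
    rw [add_zero] at hT
    refine hT.congr fun n => ?_
    rw [hsplit n, add_div]
  · have hsplit : ∀ n : ℕ, Hent (convPow ν n)
        = Hent (convPow etaF2 n) + Hent (convPow μ n) := by
      intro n
      rw [hνfun, convPow_prodFun etaF2 μ s4 F etaF2_nonneg hμ0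
        etaF2_supp hμsupp etaF2_mass hμmass n]
      obtain ⟨a0, asupp, amass⟩ :=
        convPow_bundle etaF2 s4 etaF2_nonneg etaF2_supp etaF2_mass n
      obtain ⟨b0, bsupp, bmass⟩ :=
        convPow_bundle μ F hμ0 hμsupp hμmass n
      exact Hent_prodFun _ _ _ _ asupp bsupp amass bmass
    have hT := eta_tendsto.add hμlim
    refine hT.congr fun n => ?_
    rw [hsplit n, add_div]
end
end

section
/- Let G be a countable group and H ≤ G a finite-index subgroup. Let μ be a non-degenerate probability measure on G and let μ_H be the hitting measure on H: μ_H(h) = P(w_τ = h), where τ = min{n ≥ 1 : w_n ∈ H} is the first time the μ-random walk lies in H. Then μ_H is a probability measure on H (i.e., τ < ∞ almost surely), and the μ-random walk on G is transient if and only if the μ_H-random walk on H is transient. -/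
open Real Filter
open scoped ENNReal Classical

noncomputable section

/-- The hitting measure on a subgroup H: the law of the random walk at the first
positive time it lies in H. -/
def hitMeas {G : Type*} [Group G] (μ : G → ℝ) (H : Subgroup G) : G → ℝ := fun h =>
  ∑' n : ℕ, ∑' g : Fin (n + 1) → G,
    if (∀ m, 1 ≤ m → m ≤ n → walkProd g m ∉ H) ∧ walkProd g (n + 1) = h then
      ∏ i, μ (g i) else 0

set_option linter.unusedSectionVars false
set_option linter.unusedVariables false

namespace Stmt16Aux

variable {G : Type*} [Group G]

lemma tsum_fiber {α β : Type*} (φ : α → β) (C : α → ℝ≥0∞) :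
    ∑' a, C a = ∑' (y : β) (a : α), if φ a = y then C a else 0 := by
  rw [ENNReal.tsum_comm]
  congr 1; funext a
  rw [tsum_eq_single (φ a) (fun y hy => if_neg fun h => hy h.symm), if_pos rfl]

lemma walkProd_zero {n : ℕ} (g : Fin n → G) : walkProd g 0 = 1 := by
  simp [walkProd]

lemma walkProd_self {n : ℕ} (g : Fin n → G) : walkProd g n = (List.ofFn g).prod := by
  rw [walkProd, List.take_of_length_le (by simp)]

lemma walkProd_append_left {n m : ℕ} (a : Fin n → G) (b : Fin m → G) {j : ℕ} (hj : j ≤ n) :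
    walkProd (Fin.append a b) j = walkProd a j := by
  rw [walkProd, walkProd, List.ofFn_fin_append, List.take_append_of_le_length (by simpa)]

lemma walkProd_append_right {n m : ℕ} (a : Fin n → G) (b : Fin m → G) (j : ℕ) :
    walkProd (Fin.append a b) (n + j) = walkProd a n * walkProd b j := by
  rw [walkProd, walkProd, walkProd, List.ofFn_fin_append,
    show n + j = (List.ofFn a).length + j by simp, List.take_append, List.prod_append,
    List.take_of_length_le (l := List.ofFn a) (by simp)]
  simp [List.take_of_length_le (l := List.ofFn a) (by simp : (List.ofFn a).length ≤ n)]

def splitEquiv (G : Type*) (n m : ℕ) : ((Fin n → G) × (Fin m → G)) ≃ (Fin (n + m) → G) where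
  toFun ab := Fin.append ab.1 ab.2
  invFun g := (fun i => g (Fin.castAdd m i), fun i => g (Fin.natAdd n i))
  left_inv ab := by
    ext i <;> simp [Fin.append_left, Fin.append_right]
  right_inv g := Fin.append_castAdd_natAdd

lemma tsum_split {n m : ℕ} (F : (Fin (n + m) → G) → ℝ≥0∞) :
    ∑' g : Fin (n + m) → G, F g
      = ∑' (a : Fin n → G) (b : Fin m → G), F (Fin.append a b) := by
  rw [← (splitEquiv G n m).tsum_eq F,
    ← ENNReal.tsum_prod (f := fun a b => F (Fin.append a b))]
  rfl

lemma prod_append {n m : ℕ} (p : G → ℝ≥0∞) (a : Fin n → G) (b : Fin m → G) :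
    (∏ i, p (Fin.append a b i)) = (∏ i, p (a i)) * ∏ i, p (b i) := by
  rw [Fin.prod_univ_add]
  simp [Fin.append_left, Fin.append_right]

lemma ite_and_mul {P Q : Prop} [Decidable P] [Decidable Q] (x y : ℝ≥0∞) :
    (if P ∧ Q then x * y else 0) = (if P then x else 0) * (if Q then y else 0) := by
  by_cases hP : P <;> by_cases hQ : Q <;> simp [hP, hQ]

lemma tsum_unique {α : Type*} [Unique α] (f : α → ℝ≥0∞) : ∑' a, f a = f default :=
  tsum_eq_single default (fun b hb => absurd (Subsingleton.elim b default) hb)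

lemma walkProd_one (b : Fin 1 → G) : walkProd b 1 = b 0 := by
  simp [walkProd]

lemma tsum_fun_one (F : (Fin 1 → G) → ℝ≥0∞) :
    ∑' b : Fin 1 → G, F b = ∑' z : G, F (fun _ => z) := by
  rw [← (Equiv.funUnique (Fin 1) G).symm.tsum_eq F]
  rfl

lemma tsum_eW (p : G → ℝ≥0∞) (hp : ∑' x, p x = 1) (n : ℕ) :
    ∑' g : Fin n → G, ∏ i, p (g i) = 1 := by
  induction n with
  | zero =>
    have : (default : Fin 0 → G) = fun i => i.elim0 := Subsingleton.elim _ _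
    rw [tsum_unique]; simp
  | succ n ih =>
    rw [tsum_split (n := n) (m := 1) (fun g => ∏ i, p (g i))]
    calc ∑' (a : Fin n → G) (b : Fin 1 → G), ∏ i, p (Fin.append a b i)
        = ∑' (a : Fin n → G) (b : Fin 1 → G), (∏ i, p (a i)) * ∏ i, p (b i) := by
          congr 1; funext a; congr 1; funext b; exact prod_append p a b
      _ = ∑' (a : Fin n → G), (∏ i, p (a i)) * ∑' (b : Fin 1 → G), ∏ i, p (b i) := by
          congr 1; funext a; rw [ENNReal.tsum_mul_left]
      _ = 1 := by
          rw [tsum_fun_one (fun b => ∏ i, p (b i))]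
          simp only [Finset.univ_unique, Finset.prod_singleton]
          have : ∑' z : G, p z = 1 := hp
          simp [ENNReal.tsum_mul_right, this, ih]

def ePow (p : G → ℝ≥0∞) (n : ℕ) (x : G) : ℝ≥0∞ :=
  ∑' g : Fin n → G, if walkProd g n = x then ∏ i, p (g i) else 0

lemma ePow_zero (p : G → ℝ≥0∞) (x : G) : ePow p 0 x = if x = 1 then 1 else 0 := by
  rw [ePow, tsum_unique]
  simp [walkProd_zero, eq_comm]

lemma ePow_succ (p : G → ℝ≥0∞) (n : ℕ) (x : G) :
    ePow p (n + 1) x = ∑' y : G, ePow p n y * p (y⁻¹ * x) := by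
  rw [ePow, tsum_split (n := n) (m := 1)]
  have step : ∀ a : Fin n → G,
      (∑' b : Fin 1 → G, if walkProd (Fin.append a b) (n + 1) = x then
        ∏ i, p (Fin.append a b i) else 0)
      = (∏ i, p (a i)) * p ((walkProd a n)⁻¹ * x) := by
    intro a
    rw [tsum_fun_one]
    rw [tsum_eq_single ((walkProd a n)⁻¹ * x)]
    · have h1 : walkProd (Fin.append a (fun _ : Fin 1 => (walkProd a n)⁻¹ * x)) (n + 1)
          = walkProd a n * ((walkProd a n)⁻¹ * x) := by
        rw [walkProd_append_right a _ 1, walkProd_one]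
      rw [if_pos (by rw [h1]; group), prod_append]
      congr 1
      simp
    · intro z hz
      rw [if_neg]
      rw [walkProd_append_right a _ 1, walkProd_one]
      intro h
      exact hz (by rw [← h]; group)
  calc ∑' (a : Fin n → G) (b : Fin 1 → G), _ = ∑' a : Fin n → G,
        (∏ i, p (a i)) * p ((walkProd a n)⁻¹ * x) := by
        congr 1; funext a; exact step a
    _ = ∑' (y : G) (a : Fin n → G), if walkProd a n = y then
          (∏ i, p (a i)) * p ((walkProd a n)⁻¹ * x) else 0 :=
        tsum_fiber (fun a => walkProd a n) _
    _ = ∑' y : G, ePow p n y * p (y⁻¹ * x) := by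
        congr 1; funext y
        rw [ePow, ← ENNReal.tsum_mul_right]
        congr 1; funext a
        by_cases h : walkProd a n = y
        · rw [if_pos h, if_pos h, h]
        · rw [if_neg h, if_neg h, zero_mul]

lemma tsum_ePow (p : G → ℝ≥0∞) (hp : ∑' x, p x = 1) (n : ℕ) :
    ∑' x : G, ePow p n x = 1 := by
  rw [show ∑' x : G, ePow p n x = ∑' (x : G) (g : Fin n → G),
      if walkProd g n = x then ∏ i, p (g i) else 0 from rfl,
    ← tsum_fiber (fun g : Fin n → G => walkProd g n) (fun g => ∏ i, p (g i))]
  exact tsum_eW p hp n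

lemma ePow_le_one (p : G → ℝ≥0∞) (hp : ∑' x, p x = 1) (n : ℕ) (x : G) :
    ePow p n x ≤ 1 := by
  rw [← tsum_ePow p hp n]; exact ENNReal.le_tsum x

lemma summable_of_pmf {μ : G → ℝ} (hμ : IsPMF μ) : Summable μ := by
  by_contra h
  have h2 := hμ.2
  rw [tsum_eq_zero_of_not_summable h] at h2
  exact one_ne_zero h2.symm

lemma tsum_ofReal_pmf {μ : G → ℝ} (hμ : IsPMF μ) :
    ∑' g, ENNReal.ofReal (μ g) = 1 := by
  rw [← ENNReal.ofReal_tsum_of_nonneg hμ.1 (summable_of_pmf hμ), hμ.2, ENNReal.ofReal_one]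

lemma pmf_le_one {μ : G → ℝ} (hμ : IsPMF μ) (g : G) : μ g ≤ 1 := by
  rw [← hμ.2]
  exact Summable.le_tsum (summable_of_pmf hμ) g (fun j _ => hμ.1 j)

/-- Transfer: real convolution powers match `ePow` of the `ofReal` measure. -/
lemma convPow_transfer {μ : G → ℝ} (hμ : IsPMF μ) (n : ℕ) :
    (∀ x, 0 ≤ convPow μ n x) ∧
      ∀ x, ENNReal.ofReal (convPow μ n x) = ePow (fun g => ENNReal.ofReal (μ g)) n x := by
  set p := fun g => ENNReal.ofReal (μ g) with hpdef
  have hp : ∑' x, p x = 1 := tsum_ofReal_pmf hμ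
  induction n with
  | zero =>
    refine ⟨fun x => ?_, fun x => ?_⟩
    · simp only [convPow]; split <;> norm_num
    · simp only [convPow, ePow_zero]; split <;> simp
  | succ n ih =>
    have hnn := ih.1
    have hid := ih.2
    have hsum : Summable (convPow μ n) := by
      have : ∀ x, convPow μ n x = (ePow p n x).toReal := by
        intro x; rw [← hid x, ENNReal.toReal_ofReal (hnn x)]
      have hfin : ∑' x, ePow p n x ≠ ⊤ := by rw [tsum_ePow p hp n]; exact ENNReal.one_ne_top
      exact (funext this) ▸ ENNReal.summable_toReal hfin
    have hinner : ∀ x : G, Summable (fun h => convPow μ n h * μ (h⁻¹ * x)) := by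
      intro x
      refine Summable.of_nonneg_of_le (fun h => mul_nonneg (hnn h) (hμ.1 _))
        (fun h => ?_) hsum
      exact mul_le_of_le_one_right (hnn h) (pmf_le_one hμ _)
    constructor
    · intro x
      exact tsum_nonneg fun h => mul_nonneg (hnn h) (hμ.1 _)
    · intro x
      show ENNReal.ofReal (∑' h, convPow μ n h * μ (h⁻¹ * x)) = _
      rw [ENNReal.ofReal_tsum_of_nonneg (fun h => mul_nonneg (hnn h) (hμ.1 _)) (hinner x),
        ePow_succ]
      congr 1; funext h
      rw [ENNReal.ofReal_mul (hnn h), hid h]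

def eA (p : G → ℝ≥0∞) (H : Subgroup G) (n : ℕ) : ℝ≥0∞ :=
  ∑' g : Fin n → G, if (∀ m, 1 ≤ m → m ≤ n → walkProd g m ∉ H) then ∏ i, p (g i) else 0

def eT (p : G → ℝ≥0∞) (H : Subgroup G) (n : ℕ) (x : G) : ℝ≥0∞ :=
  ∑' g : Fin (n + 1) → G,
    if (∀ m, 1 ≤ m → m ≤ n → walkProd g m ∉ H) ∧ walkProd g (n + 1) = x then
      ∏ i, p (g i) else 0

def ehit (p : G → ℝ≥0∞) (H : Subgroup G) (x : G) : ℝ≥0∞ := ∑' n : ℕ, eT p H n x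

def eS (p : G → ℝ≥0∞) (H : Subgroup G) (n : ℕ) : ℝ≥0∞ := ∑' h : H, eT p H n (↑h)

lemma eA_zero (p : G → ℝ≥0∞) (H : Subgroup G) : eA p H 0 = 1 := by
  rw [eA, tsum_unique, if_pos (fun m h1 h0 => absurd (h1.trans h0) (by norm_num))]
  simp

lemma eA_step (p : G → ℝ≥0∞) (H : Subgroup G) (hp : ∑' x, p x = 1) (n : ℕ) :
    eA p H n = eA p H (n + 1) + eS p H n := by
  classical
  have key1 : eA p H n = ∑' g : Fin (n + 1) → G,
      (if (∀ m, 1 ≤ m → m ≤ n → walkProd g m ∉ H) then ∏ i, p (g i) else 0) := by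
    rw [tsum_split (n := n) (m := 1)
      (fun g => if (∀ m, 1 ≤ m → m ≤ n → walkProd g m ∉ H) then ∏ i, p (g i) else 0)]
    have point : ∀ (a : Fin n → G) (b : Fin 1 → G),
        (if (∀ m, 1 ≤ m → m ≤ n → walkProd (Fin.append a b) m ∉ H) then
          ∏ i, p (Fin.append a b i) else 0)
        = (if (∀ m, 1 ≤ m → m ≤ n → walkProd a m ∉ H) then ∏ i, p (a i) else 0)
            * ∏ i, p (b i) := by
      intro a b
      rw [prod_append]
      by_cases h : ∀ m, 1 ≤ m → m ≤ n → walkProd a m ∉ H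
      · rw [if_pos h, if_pos (fun m h1 h2 => by
          rw [walkProd_append_left a b h2]; exact h m h1 h2)]
      · rw [if_neg h, if_neg, zero_mul]
        intro hc
        exact h fun m h1 h2 => by rw [← walkProd_append_left a b h2]; exact hc m h1 h2
    symm
    calc ∑' (a : Fin n → G) (b : Fin 1 → G),
          (if (∀ m, 1 ≤ m → m ≤ n → walkProd (Fin.append a b) m ∉ H) then
            ∏ i, p (Fin.append a b i) else 0)
        = ∑' (a : Fin n → G) (b : Fin 1 → G),
            (if (∀ m, 1 ≤ m → m ≤ n → walkProd a m ∉ H) then ∏ i, p (a i) else 0)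
              * ∏ i, p (b i) := by
          congr 1; funext a; congr 1; funext b; exact point a b
      _ = ∑' (a : Fin n → G),
            (if (∀ m, 1 ≤ m → m ≤ n → walkProd a m ∉ H) then ∏ i, p (a i) else 0)
              * ∑' b : Fin 1 → G, ∏ i, p (b i) := by
          congr 1; funext a; exact ENNReal.tsum_mul_left
      _ = eA p H n := by
          rw [tsum_eW p hp 1]
          simp [eA]
  have key2 : ∀ g : Fin (n + 1) → G,
      (if (∀ m, 1 ≤ m → m ≤ n → walkProd g m ∉ H) then ∏ i, p (g i) else 0)
      = (if (∀ m, 1 ≤ m → m ≤ n + 1 → walkProd g m ∉ H) then ∏ i, p (g i) else 0)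
        + (if ((∀ m, 1 ≤ m → m ≤ n → walkProd g m ∉ H) ∧ walkProd g (n + 1) ∈ H) then
            ∏ i, p (g i) else 0) := by
    intro g
    by_cases h : ∀ m, 1 ≤ m → m ≤ n → walkProd g m ∉ H
    · by_cases h2 : walkProd g (n + 1) ∈ H
      · have hA : ¬ (∀ m, 1 ≤ m → m ≤ n + 1 → walkProd g m ∉ H) :=
          fun hc => hc (n + 1) (by omega) le_rfl h2
        rw [if_pos h, if_neg hA, if_pos ⟨h, h2⟩, zero_add]
      · have hA : ∀ m, 1 ≤ m → m ≤ n + 1 → walkProd g m ∉ H := by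
          intro m h1 hm
          rcases Nat.eq_or_lt_of_le hm with he | hl
          · rw [he]; exact h2
          · exact h m h1 (by omega)
        rw [if_pos h, if_pos hA, if_neg (fun c => h2 c.2), add_zero]
    · have hA : ¬ (∀ m, 1 ≤ m → m ≤ n + 1 → walkProd g m ∉ H) :=
        fun hc => h fun m h1 hm => hc m h1 (by omega)
      rw [if_neg h, if_neg hA, if_neg (fun c => h c.1), add_zero]
  have key3 : (∑' g : Fin (n + 1) → G,
      if ((∀ m, 1 ≤ m → m ≤ n → walkProd g m ∉ H) ∧ walkProd g (n + 1) ∈ H) then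
        ∏ i, p (g i) else 0) = eS p H n := by
    rw [eS]
    simp only [eT]
    rw [ENNReal.tsum_comm]
    congr 1; funext g
    by_cases hAv : ∀ m, 1 ≤ m → m ≤ n → walkProd g m ∉ H
    · by_cases hw : walkProd g (n + 1) ∈ H
      · rw [if_pos ⟨hAv, hw⟩,
          tsum_eq_single (⟨walkProd g (n + 1), hw⟩ : H) ?_]
        · rw [if_pos ⟨hAv, rfl⟩]
        · intro h' hne
          rw [if_neg]
          rintro ⟨-, he⟩
          exact hne (Subtype.ext he.symm)
      · rw [if_neg (fun c => hw c.2)]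
        refine (ENNReal.tsum_eq_zero.mpr ?_).symm
        intro h'
        rw [if_neg]
        rintro ⟨-, he⟩
        exact hw (he ▸ h'.2)
    · rw [if_neg (fun c => hAv c.1)]
      refine (ENNReal.tsum_eq_zero.mpr ?_).symm
      intro h'
      rw [if_neg (fun c => hAv c.1)]
  calc eA p H n = ∑' g : Fin (n + 1) → G,
        ((if (∀ m, 1 ≤ m → m ≤ n + 1 → walkProd g m ∉ H) then ∏ i, p (g i) else 0)
          + (if ((∀ m, 1 ≤ m → m ≤ n → walkProd g m ∉ H) ∧ walkProd g (n + 1) ∈ H) then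
              ∏ i, p (g i) else 0)) := by
        rw [key1]; congr 1; funext g; exact key2 g
    _ = eA p H (n + 1) + eS p H n := by rw [ENNReal.tsum_add, key3]; rfl

lemma eA_partial (p : G → ℝ≥0∞) (H : Subgroup G) (hp : ∑' x, p x = 1) (N : ℕ) :
    eA p H N + ∑ n ∈ Finset.range N, eS p H n = 1 := by
  induction N with
  | zero => simp [eA_zero]
  | succ N ih =>
    rw [Finset.sum_range_succ,
      show eA p H (N + 1) + (∑ n ∈ Finset.range N, eS p H n + eS p H N)
        = (eA p H (N + 1) + eS p H N) + ∑ n ∈ Finset.range N, eS p H n by ring,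
      ← eA_step p H hp N]
    exact ih

lemma eA_anti (p : G → ℝ≥0∞) (H : Subgroup G) (hp : ∑' x, p x = 1) {a b : ℕ} (hab : a ≤ b) :
    eA p H b ≤ eA p H a := by
  induction hab with
  | refl => exact le_rfl
  | @step m h ih => exact le_trans (le_trans le_self_add (eA_step p H hp m).ge) ih

def eC (p : G → ℝ≥0∞) (H : Subgroup G) (m : ℕ) (x : G) : ℝ≥0∞ :=
  ∑' b : Fin m → G, if x * walkProd b m ∈ H then ∏ i, p (b i) else 0

def eD (p : G → ℝ≥0∞) (H : Subgroup G) (K : ℕ) (x : G) : ℝ≥0∞ :=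
  ∑' b : Fin K → G, if (∀ j, 1 ≤ j → j ≤ K → x * walkProd b j ∉ H) then ∏ i, p (b i) else 0

lemma eC_coset (p : G → ℝ≥0∞) (H : Subgroup G) (m : ℕ) {x y : G} (hxy : x * y⁻¹ ∈ H) :
    eC p H m x = eC p H m y := by
  unfold eC
  congr 1; funext b
  have hiff : (x * walkProd b m ∈ H) ↔ (y * walkProd b m ∈ H) := by
    rw [show x * walkProd b m = (x * y⁻¹) * (y * walkProd b m) by group]
    exact H.mul_mem_cancel_left hxy
  simp only [hiff]

lemma eC_pos (p : G → ℝ≥0∞) (H : Subgroup G)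
    (hnd' : ∀ x : G, ∃ n, 1 ≤ n ∧ 0 < ePow p n x) (x : G) :
    ∃ m, 1 ≤ m ∧ 0 < eC p H m x := by
  obtain ⟨m, hm1, hpos⟩ := hnd' x⁻¹
  refine ⟨m, hm1, lt_of_lt_of_le hpos (ENNReal.tsum_le_tsum fun b => ?_)⟩
  by_cases h : walkProd b m = x⁻¹
  · rw [if_pos h, if_pos (by rw [h, mul_inv_cancel]; exact H.one_mem)]
  · rw [if_neg h]; exact zero_le

lemma eC_extend (p : G → ℝ≥0∞) (H : Subgroup G) (hp : ∑' x, p x = 1)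
    {m K : ℕ} (hmK : m ≤ K) (x : G) :
    (∑' b : Fin K → G, if x * walkProd b m ∈ H then ∏ i, p (b i) else 0) = eC p H m x := by
  obtain ⟨r, rfl⟩ := Nat.exists_eq_add_of_le hmK
  rw [tsum_split (n := m) (m := r)
    (fun b => if x * walkProd b m ∈ H then ∏ i, p (b i) else 0)]
  calc ∑' (a : Fin m → G) (b : Fin r → G),
        (if x * walkProd (Fin.append a b) m ∈ H then ∏ i, p (Fin.append a b i) else 0)
      = ∑' (a : Fin m → G) (b : Fin r → G),
          (if x * walkProd a m ∈ H then ∏ i, p (a i) else 0) * ∏ i, p (b i) := by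
        congr 1; funext a; congr 1; funext b
        rw [walkProd_append_left a b le_rfl, prod_append]
        by_cases h : x * walkProd a m ∈ H
        · rw [if_pos h, if_pos h]
        · rw [if_neg h, if_neg h, zero_mul]
    _ = eC p H m x := by
        rw [show (∑' (a : Fin m → G) (b : Fin r → G),
            (if x * walkProd a m ∈ H then ∏ i, p (a i) else 0) * ∏ i, p (b i))
          = ∑' (a : Fin m → G),
            (if x * walkProd a m ∈ H then ∏ i, p (a i) else 0) * ∑' b : Fin r → G, ∏ i, p (b i)
          from by congr 1; funext a; exact ENNReal.tsum_mul_left]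
        rw [tsum_eW p hp r]
        simp [eC]

lemma eD_le (p : G → ℝ≥0∞) (H : Subgroup G) (hp : ∑' x, p x = 1)
    {m K : ℕ} (h1 : 1 ≤ m) (hmK : m ≤ K) (x : G) :
    eD p H K x ≤ 1 - eC p H m x := by
  have hCle : eC p H m x ≤ 1 := by
    rw [← eC_extend p H hp hmK x, ← tsum_eW p hp K]
    refine ENNReal.tsum_le_tsum fun b => ?_
    split_ifs
    exacts [le_rfl, zero_le]
  have hsum : eD p H K x + eC p H m x ≤ 1 := by
    rw [← eC_extend p H hp hmK x, eD, ← ENNReal.tsum_add, ← tsum_eW p hp K]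
    refine ENNReal.tsum_le_tsum fun b => ?_
    by_cases hA : ∀ j, 1 ≤ j → j ≤ K → x * walkProd b j ∉ H
    · rw [if_pos hA, if_neg (hA m h1 hmK), add_zero]
    · rw [if_neg hA, zero_add]
      split_ifs
      exacts [le_rfl, zero_le]
  exact ENNReal.le_sub_of_add_le_right (by exact ne_top_of_le_ne_top ENNReal.one_ne_top hCle) hsum

lemma uniform_bound (p : G → ℝ≥0∞) (H : Subgroup G) [Finite (G ⧸ H)]
    (hp : ∑' x, p x = 1) (hnd' : ∀ x : G, ∃ n, 1 ≤ n ∧ 0 < ePow p n x) :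
    ∃ (K : ℕ) (δ : ℝ≥0∞), 0 < δ ∧ δ ≠ ⊤ ∧ ∀ x : G, eD p H K x ≤ 1 - δ := by
  classical
  have hchoice : ∀ c : G ⧸ H, ∃ m, 1 ≤ m ∧ 0 < eC p H m ((Quotient.out c)⁻¹) :=
    fun c => eC_pos p H hnd' _
  choose mfun hm1 hpos using hchoice
  have : Fintype (G ⧸ H) := Fintype.ofFinite _
  set K := Finset.univ.sup mfun with hK
  obtain ⟨c₀, hc₀⟩ := Finite.exists_min (fun c : G ⧸ H => eC p H (mfun c) ((Quotient.out c)⁻¹))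
  set δ := eC p H (mfun c₀) ((Quotient.out c₀)⁻¹) with hδ
  have hδ1 : δ ≤ 1 := by
    rw [hδ, ← tsum_eW p hp (mfun c₀)]
    refine ENNReal.tsum_le_tsum fun b => ?_
    split_ifs
    exacts [le_rfl, zero_le]
  refine ⟨K, δ, hpos c₀, ne_top_of_le_ne_top ENNReal.one_ne_top hδ1, fun x => ?_⟩
  set c := QuotientGroup.mk (s := H) x⁻¹ with hc
  have hmem : x * ((Quotient.out c)⁻¹)⁻¹ ∈ H := by
    have h1 : QuotientGroup.mk (s := H) (Quotient.out c) = QuotientGroup.mk (s := H) x⁻¹ := by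
      rw [hc]; exact Quotient.out_eq _
    have h2 : (Quotient.out c)⁻¹ * x⁻¹ ∈ H := QuotientGroup.eq.mp h1
    have h3 : (((Quotient.out c)⁻¹) * x⁻¹)⁻¹ ∈ H := H.inv_mem h2
    simpa [mul_inv_rev] using h3
  have heq : eC p H (mfun c) x = eC p H (mfun c) ((Quotient.out c)⁻¹) :=
    eC_coset p H (mfun c) hmem
  calc eD p H K x ≤ 1 - eC p H (mfun c) x :=
        eD_le p H hp (hm1 c) (Finset.le_sup (Finset.mem_univ c)) x
    _ ≤ 1 - δ := by
        rw [heq]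
        exact tsub_le_tsub_left (hc₀ c) 1

lemma eA_contract (p : G → ℝ≥0∞) (H : Subgroup G) (hp : ∑' x, p x = 1)
    {K : ℕ} {δ : ℝ≥0∞} (hK : ∀ x : G, eD p H K x ≤ 1 - δ) (n : ℕ) :
    eA p H (n + K) ≤ eA p H n * (1 - δ) := by
  classical
  rw [eA, tsum_split (n := n) (m := K)
    (fun g => if (∀ m, 1 ≤ m → m ≤ n + K → walkProd g m ∉ H) then ∏ i, p (g i) else 0)]
  have point : ∀ (a : Fin n → G) (b : Fin K → G),
      (if (∀ m, 1 ≤ m → m ≤ n + K → walkProd (Fin.append a b) m ∉ H) then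
        ∏ i, p (Fin.append a b i) else 0)
      = (if (∀ m, 1 ≤ m → m ≤ n → walkProd a m ∉ H) then ∏ i, p (a i) else 0)
        * (if (∀ j, 1 ≤ j → j ≤ K → walkProd a n * walkProd b j ∉ H) then ∏ i, p (b i) else 0) := by
    intro a b
    have hiff : (∀ m, 1 ≤ m → m ≤ n + K → walkProd (Fin.append a b) m ∉ H) ↔
        ((∀ m, 1 ≤ m → m ≤ n → walkProd a m ∉ H) ∧
          (∀ j, 1 ≤ j → j ≤ K → walkProd a n * walkProd b j ∉ H)) := by
      constructor
      · intro hc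
        constructor
        · intro m h1 h2
          rw [← walkProd_append_left a b h2]
          exact hc m h1 (by omega)
        · intro j hj1 hjK
          rw [← walkProd_append_right a b j]
          exact hc (n + j) (by omega) (by omega)
      · rintro ⟨hc1, hc2⟩ m h1 h2
        rcases le_or_gt m n with hle | hlt
        · rw [walkProd_append_left a b hle]
          exact hc1 m h1 hle
        · have hm : m = n + (m - n) := by omega
          rw [hm, walkProd_append_right a b (m - n)]
          exact hc2 (m - n) (by omega) (by omega)
    by_cases h1 : ∀ m, 1 ≤ m → m ≤ n → walkProd a m ∉ H
    · by_cases h2 : ∀ j, 1 ≤ j → j ≤ K → walkProd a n * walkProd b j ∉ H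
      · rw [if_pos h1, if_pos h2, if_pos (hiff.mpr ⟨h1, h2⟩), prod_append]
      · rw [if_pos h1, if_neg h2, mul_zero, if_neg (fun hc => h2 (hiff.mp hc).2)]
    · rw [if_neg h1, zero_mul, if_neg (fun hc => h1 (hiff.mp hc).1)]
  calc (∑' (a : Fin n → G) (b : Fin K → G),
        if (∀ m, 1 ≤ m → m ≤ n + K → walkProd (Fin.append a b) m ∉ H) then
          ∏ i, p (Fin.append a b i) else 0)
      = ∑' (a : Fin n → G),
          (if (∀ m, 1 ≤ m → m ≤ n → walkProd a m ∉ H) then ∏ i, p (a i) else 0)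
            * eD p H K (walkProd a n) := by
        congr 1; funext a
        rw [show (∑' b : Fin K → G,
            (if (∀ m, 1 ≤ m → m ≤ n + K → walkProd (Fin.append a b) m ∉ H) then
              ∏ i, p (Fin.append a b i) else 0))
          = ∑' b : Fin K → G,
            (if (∀ m, 1 ≤ m → m ≤ n → walkProd a m ∉ H) then ∏ i, p (a i) else 0)
              * (if (∀ j, 1 ≤ j → j ≤ K → walkProd a n * walkProd b j ∉ H) then
                  ∏ i, p (b i) else 0)
          from by congr 1; funext b; exact point a b]
        rw [ENNReal.tsum_mul_left]
        rfl
    _ ≤ ∑' (a : Fin n → G),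
          (if (∀ m, 1 ≤ m → m ≤ n → walkProd a m ∉ H) then ∏ i, p (a i) else 0) * (1 - δ) :=
        ENNReal.tsum_le_tsum fun a => mul_le_mul_right (hK _) _
    _ = eA p H n * (1 - δ) := by rw [ENNReal.tsum_mul_right]; rfl

lemma eA_geom (p : G → ℝ≥0∞) (H : Subgroup G) (hp : ∑' x, p x = 1)
    {K : ℕ} {δ : ℝ≥0∞} (hK : ∀ x : G, eD p H K x ≤ 1 - δ) (k : ℕ) :
    eA p H (k * K) ≤ (1 - δ) ^ k := by
  induction k with
  | zero => rw [Nat.zero_mul, eA_zero, pow_zero]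
  | succ k ih =>
    calc eA p H ((k + 1) * K) = eA p H (k * K + K) := by rw [Nat.succ_mul]
      _ ≤ eA p H (k * K) * (1 - δ) := eA_contract p H hp hK (k * K)
      _ ≤ (1 - δ) ^ k * (1 - δ) := mul_le_mul_left ih _
      _ = (1 - δ) ^ (k + 1) := by rw [pow_succ]

lemma tsum_eS (p : G → ℝ≥0∞) (H : Subgroup G) [Finite (G ⧸ H)]
    (hp : ∑' x, p x = 1) (hnd' : ∀ x : G, ∃ n, 1 ≤ n ∧ 0 < ePow p n x) :
    ∑' n : ℕ, eS p H n = 1 := by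
  obtain ⟨K, δ, hδpos, hδtop, hbound⟩ := uniform_bound p H hp hnd'
  have hlt1 : (1 : ℝ≥0∞) - δ < 1 :=
    ENNReal.sub_lt_self ENNReal.one_ne_top one_ne_zero (ne_of_gt hδpos)
  have hle : ∑' n : ℕ, eS p H n ≤ 1 := by
    rw [ENNReal.tsum_eq_iSup_sum]
    refine iSup_le fun s => ?_
    calc ∑ n ∈ s, eS p H n ≤ ∑ n ∈ Finset.range (s.sup id + 1), eS p H n :=
          Finset.sum_le_sum_of_subset fun n hn =>
            Finset.mem_range.mpr (Nat.lt_succ_of_le (Finset.le_sup (f := id) hn))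
      _ ≤ eA p H (s.sup id + 1) + ∑ n ∈ Finset.range (s.sup id + 1), eS p H n := le_add_self
      _ = 1 := eA_partial p H hp _
  refine le_antisymm hle (ENNReal.le_of_forall_pos_le_add fun ε hε _ => ?_)
  obtain ⟨k, hk⟩ : ∃ k, (1 - δ) ^ k < (ε : ℝ≥0∞) := by
    have := (ENNReal.tendsto_pow_atTop_nhds_zero_of_lt_one hlt1).eventually_lt_const
      (by exact_mod_cast hε : (0 : ℝ≥0∞) < ε)
    exact this.exists
  calc (1 : ℝ≥0∞) = eA p H (k * K) + ∑ n ∈ Finset.range (k * K), eS p H n :=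
        (eA_partial p H hp _).symm
    _ ≤ (1 - δ) ^ k + ∑' n : ℕ, eS p H n :=
        add_le_add (eA_geom p H hp hbound k) (ENNReal.sum_le_tsum _)
    _ ≤ (ε : ℝ≥0∞) + ∑' n : ℕ, eS p H n := add_le_add_left hk.le _
    _ = ∑' n : ℕ, eS p H n + ε := add_comm _ _

lemma tsum_ehit (p : G → ℝ≥0∞) (H : Subgroup G) [Finite (G ⧸ H)]
    (hp : ∑' x, p x = 1) (hnd' : ∀ x : G, ∃ n, 1 ≤ n ∧ 0 < ePow p n x) :
    ∑' h : H, ehit p H (↑h) = 1 := by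
  rw [show (∑' h : H, ehit p H (↑h)) = ∑' (h : H) (n : ℕ), eT p H n (↑h) from rfl,
    ENNReal.tsum_comm]
  exact tsum_eS p H hp hnd'

def visits (H : Subgroup G) {n : ℕ} (g : Fin n → G) (t : ℕ) : ℕ :=
  ((Finset.Icc 1 t).filter (fun m => walkProd g m ∈ H)).card

lemma visits_zero (H : Subgroup G) {n : ℕ} (g : Fin n → G) : visits H g 0 = 0 := by
  simp [visits]

lemma visits_succ_eq (H : Subgroup G) {n t : ℕ} (g : Fin n → G) (htn : t < n)
    (hend : walkProd g n ∈ H) (hno : ∀ m, t < m → m < n → walkProd g m ∉ H) :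
    visits H g n = visits H g t + 1 := by
  classical
  have hins : (Finset.Icc 1 n).filter (fun m => walkProd g m ∈ H)
      = insert n ((Finset.Icc 1 t).filter (fun m => walkProd g m ∈ H)) := by
    ext m
    simp only [Finset.mem_insert, Finset.mem_filter, Finset.mem_Icc]
    constructor
    · rintro ⟨⟨h1, h2⟩, hm⟩
      rcases eq_or_lt_of_le h2 with he | hl
      · left; exact he
      · right
        refine ⟨⟨h1, ?_⟩, hm⟩
        by_contra hgt
        exact hno m (by omega) hl hm
    · rintro (rfl | ⟨⟨h1, h2⟩, hm⟩)
      · exact ⟨⟨by omega, le_rfl⟩, hend⟩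
      · exact ⟨⟨h1, by omega⟩, hm⟩
  rw [visits, visits, hins, Finset.card_insert_of_notMem]
  simp only [Finset.mem_filter, Finset.mem_Icc]
  rintro ⟨⟨-, h2⟩, -⟩
  omega

lemma tsum_shift (t : ℕ) (f : ℕ → ℝ≥0∞) (hf : ∀ n, n < t → f n = 0) :
    ∑' n, f n = ∑' s, f (t + s) := by
  refine ((add_right_injective t).tsum_eq ?_).symm
  intro n hn
  by_contra hc
  simp only [Set.mem_range, not_exists] at hc
  have : n < t := by
    rcases le_or_gt t n with h | h
    · exact absurd (by omega : t + (n - t) = n) (hc (n - t))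
    · exact h
  exact hn (hf n this)

/-- The probability of having exactly `k` visits to `H` in `[1,n]` and being at `h` at time `n`,
summed over `n`. -/
def eQ (p : G → ℝ≥0∞) (H : Subgroup G) (k : ℕ) (h : H) : ℝ≥0∞ :=
  ∑' n : ℕ, ∑' g : Fin n → G,
    if (visits H g n = k ∧ walkProd g n = (↑h : G)) then ∏ i, p (g i) else 0

lemma eQ_zero (p : G → ℝ≥0∞) (H : Subgroup G) (h : H) :
    eQ p H 0 h = if h = 1 then 1 else 0 := by
  rw [eQ, tsum_eq_single 0]
  · rw [tsum_unique]
    by_cases h1 : h = 1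
    · rw [if_pos h1, if_pos]
      · simp
      · exact ⟨visits_zero H _, by rw [walkProd_zero, h1]; rfl⟩
    · rw [if_neg h1, if_neg]
      rintro ⟨-, he⟩
      rw [walkProd_zero] at he
      exact h1 (Subtype.ext (show ((h : G)) = ((1 : H) : G) from he.symm))
  · intro n hn
    refine ENNReal.tsum_eq_zero.mpr fun g => ?_
    rw [if_neg]
    rintro ⟨hv, he⟩
    have hnH : walkProd g n ∈ H := he ▸ h.2
    have h1n : 1 ≤ n := Nat.one_le_iff_ne_zero.mpr hn
    have : n ∈ (Finset.Icc 1 n).filter (fun m => walkProd g m ∈ H) := by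
      simp only [Finset.mem_filter, Finset.mem_Icc]
      exact ⟨⟨h1n, le_rfl⟩, hnH⟩
    have := Finset.card_pos.mpr ⟨n, this⟩
    rw [visits] at hv
    omega

lemma eQ_total (p : G → ℝ≥0∞) (H : Subgroup G) :
    ∑' k : ℕ, eQ p H k (1 : H) = ∑' n : ℕ, ePow p n (1 : G) := by
  rw [show (∑' k : ℕ, eQ p H k (1 : H)) = ∑' (k : ℕ) (n : ℕ) (g : Fin n → G),
      (if (visits H g n = k ∧ walkProd g n = ((1 : H) : G)) then ∏ i, p (g i) else 0) from rfl,
    ENNReal.tsum_comm]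
  congr 1; funext n
  rw [ENNReal.tsum_comm, ePow]
  congr 1; funext g
  by_cases he : walkProd g n = ((1 : H) : G)
  · rw [tsum_eq_single (visits H g n) (fun k hk => if_neg (fun c => hk c.1.symm)),
      if_pos ⟨rfl, he⟩, if_pos (show walkProd g n = (1 : G) from he)]
  · rw [ENNReal.tsum_eq_zero.mpr fun k => if_neg fun c => he c.2,
      if_neg (show ¬ walkProd g n = (1 : G) from he)]

/-- Indicator summand: exactly `k` visits in `[1,t]`, a visit at `t`, no visits in `(t,n)`,
`t < n`, and endpoint `h` at time `n`. -/
def eB (p : G → ℝ≥0∞) (H : Subgroup G) (k : ℕ) (h : H) (t : ℕ) {n : ℕ} (g : Fin n → G) : ℝ≥0∞ :=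
  if (visits H g t = k ∧ walkProd g t ∈ H ∧ (∀ m, t < m → m < n → walkProd g m ∉ H)
      ∧ t < n ∧ walkProd g n = (↑h : G)) then ∏ i, p (g i) else 0

def eQn (p : G → ℝ≥0∞) (H : Subgroup G) (k : ℕ) (h' : H) (t : ℕ) : ℝ≥0∞ :=
  ∑' a : Fin t → G, if (visits H a t = k ∧ walkProd a t = (↑h' : G)) then ∏ i, p (a i) else 0

lemma eQ_eq_tsum_eQn (p : G → ℝ≥0∞) (H : Subgroup G) (k : ℕ) (h' : H) :
    eQ p H k h' = ∑' t : ℕ, eQn p H k h' t := rfl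

lemma visits_append_left (H : Subgroup G) {t m : ℕ} (a : Fin t → G) (b : Fin m → G) :
    visits H (Fin.append a b) t = visits H a t := by
  unfold visits
  congr 1
  refine Finset.filter_congr fun m hm => ?_
  rw [walkProd_append_left a b (Finset.mem_Icc.mp hm).2]

lemma E1_lemma (p : G → ℝ≥0∞) (H : Subgroup G) (k : ℕ) (h : H) (n : ℕ) (g : Fin n → G) :
    (if (visits H g n = k + 1 ∧ walkProd g n = (↑h : G)) then ∏ i, p (g i) else 0)
      = ∑' t : ℕ, eB p H k h t g := by
  classical
  unfold eB
  by_cases hc : visits H g n = k + 1 ∧ walkProd g n = (↑h : G)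
  · obtain ⟨hv, he⟩ := hc
    have hn0 : 0 < n := by
      rcases Nat.eq_zero_or_pos n with rfl | h'
      · rw [visits_zero] at hv; omega
      · exact h'
    set s : Finset ℕ := (Finset.range n).filter (fun m => walkProd g m ∈ H) with hs
    have h0s : (0 : ℕ) ∈ s := by
      simp only [hs, Finset.mem_filter, Finset.mem_range]
      exact ⟨hn0, by rw [walkProd_zero]; exact H.one_mem⟩
    have hne : s.Nonempty := ⟨0, h0s⟩
    set t₀ := s.max' hne with ht₀
    have ht₀mem : t₀ ∈ s := s.max'_mem hne
    have ht₀mem' := Finset.mem_filter.mp ht₀mem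
    have ht₀n : t₀ < n := Finset.mem_range.mp ht₀mem'.1
    have ht₀H : walkProd g t₀ ∈ H := ht₀mem'.2
    have hno : ∀ m, t₀ < m → m < n → walkProd g m ∉ H := by
      intro m hm1 hm2 hmH
      have hmem : m ∈ s := by
        simp only [hs, Finset.mem_filter, Finset.mem_range]; exact ⟨hm2, hmH⟩
      exact absurd (Finset.le_max' s m hmem) (by omega)
    have hvt : visits H g t₀ = k := by
      have := visits_succ_eq H g ht₀n (he ▸ h.2) hno
      omega
    rw [if_pos ⟨hv, he⟩, tsum_eq_single t₀]
    · rw [if_pos ⟨hvt, ht₀H, hno, ht₀n, he⟩]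
    · intro t ht
      rw [if_neg]
      rintro ⟨hvt', htH', hno', htn', -⟩
      rcases lt_trichotomy t t₀ with hlt | heq | hgt
      · exact hno' t₀ hlt ht₀n ht₀H
      · exact ht heq
      · exact hno t hgt htn' htH'
  · rw [if_neg hc]
    refine (ENNReal.tsum_eq_zero.mpr fun t => ?_).symm
    rw [if_neg]
    rintro ⟨hvt, htH, hno, htn, he⟩
    exact hc ⟨by rw [visits_succ_eq H g htn (he ▸ h.2) hno, hvt], he⟩

lemma E4_lemma (p : G → ℝ≥0∞) (H : Subgroup G) (k : ℕ) (h : H) (t s : ℕ) :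
    (∑' g : Fin (t + (s + 1)) → G, eB p H k h t g)
      = ∑' h' : H, eQn p H k h' t * eT p H s ((↑h')⁻¹ * ↑h) := by
  classical
  rw [tsum_split (n := t) (m := s + 1) (fun g => eB p H k h t g)]
  have E4 : ∀ (a : Fin t → G) (b : Fin (s + 1) → G),
      eB p H k h t (Fin.append a b)
      = ∑' h' : H,
          (if (visits H a t = k ∧ walkProd a t = (↑h' : G)) then ∏ i, p (a i) else 0)
          * (if ((∀ m, 1 ≤ m → m ≤ s → walkProd b m ∉ H)
              ∧ walkProd b (s + 1) = (↑h' : G)⁻¹ * ↑h) then ∏ i, p (b i) else 0) := by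
    intro a b
    by_cases hx : walkProd a t ∈ H
    · set h'₀ : H := ⟨walkProd a t, hx⟩ with hh'₀
      rw [tsum_eq_single h'₀]
      · have hiff : (visits H (Fin.append a b) t = k ∧ walkProd (Fin.append a b) t ∈ H
            ∧ (∀ m, t < m → m < t + (s + 1) → walkProd (Fin.append a b) m ∉ H)
            ∧ t < t + (s + 1) ∧ walkProd (Fin.append a b) (t + (s + 1)) = (↑h : G))
            ↔ ((visits H a t = k ∧ walkProd a t = (↑h'₀ : G))
              ∧ ((∀ m, 1 ≤ m → m ≤ s → walkProd b m ∉ H)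
                ∧ walkProd b (s + 1) = (↑h'₀ : G)⁻¹ * ↑h)) := by
          rw [visits_append_left, walkProd_append_left a b le_rfl]
          constructor
          · rintro ⟨hv, -, hno, -, hend⟩
            rw [walkProd_append_right a b (s + 1)] at hend
            refine ⟨⟨hv, rfl⟩, fun m h1 h2 => ?_, ?_⟩
            · have := hno (t + m) (by omega) (by omega)
              rw [walkProd_append_right a b m] at this
              intro hmH
              exact this ((H.mul_mem_cancel_left hx).mpr hmH)
            · rw [eq_inv_mul_iff_mul_eq]
              exact hend
          · rintro ⟨⟨hv, -⟩, hno, hend⟩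
            refine ⟨hv, hx, fun m h1 h2 => ?_, by omega, ?_⟩
            · have hm : m = t + (m - t) := by omega
              rw [hm, walkProd_append_right a b (m - t)]
              intro hmH
              exact hno (m - t) (by omega) (by omega) ((H.mul_mem_cancel_left hx).mp hmH)
            · rw [walkProd_append_right a b (s + 1), ← eq_inv_mul_iff_mul_eq]
              exact hend
        unfold eB
        by_cases hA : visits H a t = k ∧ walkProd a t = (↑h'₀ : G)
        · by_cases hB : (∀ m, 1 ≤ m → m ≤ s → walkProd b m ∉ H)
              ∧ walkProd b (s + 1) = (↑h'₀ : G)⁻¹ * ↑h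
          · rw [if_pos hA, if_pos hB, if_pos (hiff.mpr ⟨hA, hB⟩), prod_append]
          · rw [if_pos hA, if_neg hB, mul_zero, if_neg (fun hc => hB (hiff.mp hc).2)]
        · rw [if_neg hA, zero_mul, if_neg (fun hc => hA (hiff.mp hc).1)]
      · intro h' hne
        rw [if_neg, zero_mul]
        rintro ⟨-, hw⟩
        exact hne (Subtype.ext (by rw [← hw]))
    · have hcond : ¬ (visits H (Fin.append a b) t = k ∧ walkProd (Fin.append a b) t ∈ H
          ∧ (∀ m, t < m → m < t + (s + 1) → walkProd (Fin.append a b) m ∉ H)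
          ∧ t < t + (s + 1) ∧ walkProd (Fin.append a b) (t + (s + 1)) = (↑h : G)) := by
        rintro ⟨-, hmem, -⟩
        rw [walkProd_append_left a b le_rfl] at hmem
        exact hx hmem
      rw [eB, if_neg hcond]
      refine (ENNReal.tsum_eq_zero.mpr fun h' => ?_).symm
      rw [if_neg, zero_mul]
      rintro ⟨-, hw⟩
      exact hx (hw ▸ h'.2)
  calc ∑' (a : Fin t → G) (b : Fin (s + 1) → G), eB p H k h t (Fin.append a b)
      = ∑' (a : Fin t → G) (b : Fin (s + 1) → G) (h' : H),
          (if (visits H a t = k ∧ walkProd a t = (↑h' : G)) then ∏ i, p (a i) else 0)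
          * (if ((∀ m, 1 ≤ m → m ≤ s → walkProd b m ∉ H)
              ∧ walkProd b (s + 1) = (↑h' : G)⁻¹ * ↑h) then ∏ i, p (b i) else 0) := by
        congr 1; funext a; congr 1; funext b; exact E4 a b
    _ = ∑' (a : Fin t → G) (h' : H) (b : Fin (s + 1) → G),
          (if (visits H a t = k ∧ walkProd a t = (↑h' : G)) then ∏ i, p (a i) else 0)
          * (if ((∀ m, 1 ≤ m → m ≤ s → walkProd b m ∉ H)
              ∧ walkProd b (s + 1) = (↑h' : G)⁻¹ * ↑h) then ∏ i, p (b i) else 0) := by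
        congr 1; funext a; exact ENNReal.tsum_comm
    _ = ∑' (h' : H) (a : Fin t → G) (b : Fin (s + 1) → G),
          (if (visits H a t = k ∧ walkProd a t = (↑h' : G)) then ∏ i, p (a i) else 0)
          * (if ((∀ m, 1 ≤ m → m ≤ s → walkProd b m ∉ H)
              ∧ walkProd b (s + 1) = (↑h' : G)⁻¹ * ↑h) then ∏ i, p (b i) else 0) :=
        ENNReal.tsum_comm
    _ = ∑' h' : H, eQn p H k h' t * eT p H s ((↑h')⁻¹ * ↑h) := by
        congr 1; funext h'
        rw [eQn, eT, ← ENNReal.tsum_mul_right]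
        congr 1; funext a
        exact ENNReal.tsum_mul_left

lemma eQ_succ (p : G → ℝ≥0∞) (H : Subgroup G) (k : ℕ) (h : H) :
    eQ p H (k + 1) h = ∑' h' : H, eQ p H k h' * ehit p H ((↑h')⁻¹ * ↑h) := by
  classical
  have E2 : eQ p H (k + 1) h = ∑' (t : ℕ) (n : ℕ) (g : Fin n → G), eB p H k h t g := by
    calc eQ p H (k + 1) h
        = ∑' (n : ℕ) (g : Fin n → G) (t : ℕ), eB p H k h t g := by
          rw [eQ]; congr 1; funext n; congr 1; funext g; exact E1_lemma p H k h n g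
      _ = ∑' (n : ℕ) (t : ℕ) (g : Fin n → G), eB p H k h t g := by
          congr 1; funext n; exact ENNReal.tsum_comm
      _ = ∑' (t : ℕ) (n : ℕ) (g : Fin n → G), eB p H k h t g := ENNReal.tsum_comm
  have E3 : ∀ t : ℕ, (∑' (n : ℕ) (g : Fin n → G), eB p H k h t g)
      = ∑' s : ℕ, ∑' g : Fin (t + (s + 1)) → G, eB p H k h t g := by
    intro t
    have hzero : ∀ n, n < t + 1 → (∑' g : Fin n → G, eB p H k h t g) = 0 := by
      intro n hn
      refine ENNReal.tsum_eq_zero.mpr fun g => ?_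
      rw [eB, if_neg]
      rintro ⟨-, -, -, htn, -⟩
      omega
    rw [tsum_shift (t + 1) _ hzero]
    congr 1; funext s
    exact congrArg (fun n => ∑' g : Fin n → G, eB p H k h t g) (by omega)
  calc eQ p H (k + 1) h
      = ∑' (t : ℕ) (s : ℕ), ∑' h' : H, eQn p H k h' t * eT p H s ((↑h')⁻¹ * ↑h) := by
        rw [E2]; congr 1; funext t
        rw [E3 t]; congr 1; funext s
        exact E4_lemma p H k h t s
    _ = ∑' (t : ℕ) (h' : H), ∑' s : ℕ, eQn p H k h' t * eT p H s ((↑h')⁻¹ * ↑h) := by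
        congr 1; funext t; exact ENNReal.tsum_comm
    _ = ∑' (h' : H) (t : ℕ), ∑' s : ℕ, eQn p H k h' t * eT p H s ((↑h')⁻¹ * ↑h) :=
        ENNReal.tsum_comm
    _ = ∑' h' : H, eQ p H k h' * ehit p H ((↑h')⁻¹ * ↑h) := by
        congr 1; funext h'
        rw [eQ_eq_tsum_eQn, ehit, ← ENNReal.tsum_mul_right]
        congr 1; funext t
        exact ENNReal.tsum_mul_left

lemma ePowH_eq_eQ (p : G → ℝ≥0∞) (H : Subgroup G) (k : ℕ) (h : H) :
    ePow (fun h : H => ehit p H (↑h)) k h = eQ p H k h := by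
  induction k generalizing h with
  | zero => rw [ePow_zero, eQ_zero]; split_ifs <;> rfl
  | succ k ih =>
    rw [ePow_succ, eQ_succ]
    congr 1; funext h'
    rw [ih h', show ((h'⁻¹ * h : H) : G) = (↑h')⁻¹ * ↑h by norm_cast]

lemma summable_iff_ofReal (f : ℕ → ℝ) (F : ℕ → ℝ≥0∞) (h0 : ∀ n, 0 ≤ f n)
    (hF : ∀ n, ENNReal.ofReal (f n) = F n) : Summable f ↔ ∑' n, F n ≠ ⊤ := by
  constructor
  · intro hs
    have : ∑' n, F n = ENNReal.ofReal (∑' n, f n) := by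
      rw [ENNReal.ofReal_tsum_of_nonneg h0 hs]
      congr 1; funext n; rw [hF n]
    rw [this]; exact ENNReal.ofReal_ne_top
  · intro hne
    refine (ENNReal.summable_toReal hne).congr fun n => ?_
    rw [← hF n, ENNReal.toReal_ofReal (h0 n)]

end Stmt16Aux

open Stmt16Aux

/-- For a finite-index subgroup H of G and a non-degenerate probability measure μ
on G, the hitting measure on H is a probability measure (the hitting time is a.s.
finite), and the μ-walk on G is transient iff the hitting-measure walk on H is
transient. -/
theorem stmt16 {G : Type*} [Group G] [Countable G] (H : Subgroup G) [H.FiniteIndex]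
    (μ : G → ℝ) (hμ : IsPMF μ)
    (hnd : ∀ g : G, ∃ n : ℕ, 1 ≤ n ∧ 0 < convPow μ n g) :
    (∑' h : H, hitMeas μ H (h : G)) = 1 ∧
      (Summable (fun n : ℕ => convPow μ n (1 : G)) ↔
        Summable (fun n : ℕ => convPow (fun h : H => hitMeas μ H (h : G)) n (1 : H))) := by
  classical
  set p : G → ℝ≥0∞ := fun g => ENNReal.ofReal (μ g) with hpdef
  have hp : ∑' x, p x = 1 := tsum_ofReal_pmf hμ
  have htrans := fun n => convPow_transfer hμ n
  have hnd' : ∀ x : G, ∃ n, 1 ≤ n ∧ 0 < ePow p n x := by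
    intro x
    obtain ⟨n, hn1, hn⟩ := hnd x
    exact ⟨n, hn1, by rw [← (htrans n).2 x]; exact ENNReal.ofReal_pos.mpr hn⟩
  -- summability of path weights
  have hWsum : ∀ m : ℕ, Summable (fun g : Fin m → G => ∏ i, μ (g i)) := by
    intro m
    have hfin : ∑' g : Fin m → G, ∏ i, p (g i) ≠ ⊤ := by
      rw [tsum_eW p hp m]; exact ENNReal.one_ne_top
    refine (ENNReal.summable_toReal hfin).congr fun g => ?_
    rw [← ENNReal.ofReal_prod_of_nonneg (fun i _ => hμ.1 _),
      ENNReal.toReal_ofReal (Finset.prod_nonneg fun i _ => hμ.1 _)]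
  -- transfer of the inner sums of hitMeas
  have hiT : ∀ (n : ℕ) (x : G),
      ENNReal.ofReal (∑' g : Fin (n + 1) → G,
        if (∀ m, 1 ≤ m → m ≤ n → walkProd g m ∉ H) ∧ walkProd g (n + 1) = x then
          ∏ i, μ (g i) else 0)
      = eT p H n x := by
    intro n x
    have hnn : ∀ g : Fin (n + 1) → G,
        0 ≤ if (∀ m, 1 ≤ m → m ≤ n → walkProd g m ∉ H) ∧ walkProd g (n + 1) = x then
          ∏ i, μ (g i) else 0 := by
      intro g; split_ifs
      · exact Finset.prod_nonneg fun i _ => hμ.1 _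
      · exact le_rfl
    have hsumm : Summable (fun g : Fin (n + 1) → G =>
        if (∀ m, 1 ≤ m → m ≤ n → walkProd g m ∉ H) ∧ walkProd g (n + 1) = x then
          ∏ i, μ (g i) else 0) := by
      refine Summable.of_nonneg_of_le hnn (fun g => ?_) (hWsum (n + 1))
      split_ifs
      · exact le_rfl
      · exact Finset.prod_nonneg fun i _ => hμ.1 _
    rw [ENNReal.ofReal_tsum_of_nonneg hnn hsumm, eT]
    congr 1; funext g
    split_ifs
    · exact ENNReal.ofReal_prod_of_nonneg (fun i _ => hμ.1 _)
    · exact ENNReal.ofReal_zero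
  have hT_ne_top : ∀ (n : ℕ) (x : G), eT p H n x ≠ ⊤ :=
    fun n x => (hiT n x) ▸ ENNReal.ofReal_ne_top
  have hhit : ∀ x : G, hitMeas μ H x = (ehit p H x).toReal := by
    intro x
    simp only [hitMeas]
    have : ∀ n : ℕ, (∑' g : Fin (n + 1) → G,
        if (∀ m, 1 ≤ m → m ≤ n → walkProd g m ∉ H) ∧ walkProd g (n + 1) = x then
          ∏ i, μ (g i) else 0) = (eT p H n x).toReal := by
      intro n
      rw [← hiT n x, ENNReal.toReal_ofReal (tsum_nonneg fun g => by
        split_ifs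
        · exact Finset.prod_nonneg fun i _ => hμ.1 _
        · exact le_rfl)]
    calc (∑' n : ℕ, ∑' g : Fin (n + 1) → G,
        if (∀ m, 1 ≤ m → m ≤ n → walkProd g m ∉ H) ∧ walkProd g (n + 1) = x then
          ∏ i, μ (g i) else 0)
        = ∑' n : ℕ, (eT p H n x).toReal := by congr 1; funext n; exact this n
      _ = (∑' n : ℕ, eT p H n x).toReal := (ENNReal.tsum_toReal_eq (fun n => hT_ne_top n x)).symm
      _ = (ehit p H x).toReal := rfl
  have hehit1 : ∑' h : H, ehit p H (↑h) = 1 := tsum_ehit p H hp hnd'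
  have hehit_ne_top : ∀ h : H, ehit p H (↑h) ≠ ⊤ := fun h =>
    ne_top_of_le_ne_top ENNReal.one_ne_top (by rw [← hehit1]; exact ENNReal.le_tsum h)
  have goal1 : (∑' h : H, hitMeas μ H (h : G)) = 1 := by
    calc ∑' h : H, hitMeas μ H (h : G) = ∑' h : H, (ehit p H (↑h)).toReal := by
          congr 1; funext h; exact hhit _
      _ = (∑' h : H, ehit p H (↑h)).toReal := (ENNReal.tsum_toReal_eq hehit_ne_top).symm
      _ = 1 := by rw [hehit1]; exact ENNReal.toReal_one
  refine ⟨goal1, ?_⟩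
  set ν : H → ℝ := fun h => hitMeas μ H (h : G) with hνdef
  have hν : IsPMF ν := ⟨fun h => by rw [hνdef]; dsimp only; rw [hhit]; exact ENNReal.toReal_nonneg,
    goal1⟩
  have hq : (fun h : H => ENNReal.ofReal (ν h)) = fun h : H => ehit p H (↑h) := by
    funext h
    rw [hνdef]; dsimp only; rw [hhit, ENNReal.ofReal_toReal (hehit_ne_top h)]
  have htransH := fun k => convPow_transfer (G := H) hν k
  have hFH : ∀ k : ℕ, ENNReal.ofReal (convPow ν k (1 : H)) = eQ p H k (1 : H) := by
    intro k
    rw [(htransH k).2 (1 : H), hq, ePowH_eq_eQ]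
  have iff1 : Summable (fun n : ℕ => convPow μ n (1 : G)) ↔ ∑' n, ePow p n (1 : G) ≠ ⊤ :=
    summable_iff_ofReal _ _ (fun n => (htrans n).1 _) (fun n => (htrans n).2 _)
  have iff2 : Summable (fun k : ℕ => convPow ν k (1 : H)) ↔ ∑' k, eQ p H k (1 : H) ≠ ⊤ :=
    summable_iff_ofReal _ _ (fun k => (htransH k).1 _) hFH
  rw [iff1, iff2, eQ_total p H]
end
end

section
/- Let G be a countable group and let μ, {μ_k} be probability measures on G with finite Shannon entropy such that μ_k(g) → μ(g) for all g ∈ G and H(μ_k) → H(μ). Then for every fixed n ≥ 1, the convolution powers converge pointwise, μ_k^{*n}(g) → μ^{*n}(g) for all g, and their entropies converge: H(μ_k^{*n}) → H(μ^{*n}). -/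
open Real Filter
open scoped ENNReal Classical

noncomputable section

namespace Stmt19Aux

variable {α β X Y : Type*}

/-! ### Generic helpers -/

lemma summable_of_tsum_ofReal_ne_top {f : α → ℝ} (h0 : ∀ a, 0 ≤ f a)
    (h : ∑' a, ENNReal.ofReal (f a) ≠ ∞) : Summable f := by
  have h1 : Summable fun a => (f a).toNNReal := ENNReal.tsum_coe_ne_top_iff_summable.1 h
  exact (NNReal.summable_coe.2 h1).congr fun a => Real.coe_toNNReal _ (h0 a)

lemma ofReal_ite (c : Prop) [Decidable c] (a : ℝ) :
    ENNReal.ofReal (if c then a else 0) = if c then ENNReal.ofReal a else 0 := by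
  split_ifs <;> simp

lemma pmf_summable {μ : α → ℝ} (h : IsPMF μ) : Summable μ := by
  by_contra hc
  have h2 := h.2
  rw [tsum_eq_zero_of_not_summable hc] at h2
  norm_num at h2

lemma pmf_le_one {μ : α → ℝ} (h : IsPMF μ) (g : α) : μ g ≤ 1 := by
  have := Summable.le_tsum (pmf_summable h) g (fun b _ => h.1 b)
  rwa [h.2] at this

lemma pmf_tsum_ofReal {μ : α → ℝ} (h : IsPMF μ) :
    ∑' g, ENNReal.ofReal (μ g) = 1 := by
  rw [← ENNReal.ofReal_tsum_of_nonneg h.1 (pmf_summable h), h.2, ENNReal.ofReal_one]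

/-! ### Fiberwise sums -/

lemma summable_fiber_ite (pj : X → Y) {f : X → ℝ} (h0 : ∀ x, 0 ≤ f x) (hf : Summable f)
    (y : Y) : Summable fun x => if pj x = y then f x else 0 := by
  refine Summable.of_nonneg_of_le (fun x => ?_) (fun x => ?_) hf
  · split_ifs <;> simp [h0 x]
  · split_ifs <;> simp [h0 x]

lemma ofReal_fiber (pj : X → Y) {f : X → ℝ} (h0 : ∀ x, 0 ≤ f x) (hf : Summable f) (y : Y) :
    ENNReal.ofReal (∑' x, if pj x = y then f x else 0)
      = ∑' x, if pj x = y then ENNReal.ofReal (f x) else 0 := by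
  rw [ENNReal.ofReal_tsum_of_nonneg (fun x => by split_ifs <;> simp [h0 x])
    (summable_fiber_ite pj h0 hf y)]
  exact tsum_congr fun x => ofReal_ite _ _

lemma tsum_fiber_ite_ennreal (pj : X → Y) (F : X → ℝ≥0∞) :
    ∑' (y : Y) (x : X), (if pj x = y then F x else 0) = ∑' x, F x := by
  rw [ENNReal.tsum_comm]
  refine tsum_congr fun x => ?_
  rw [tsum_eq_single (pj x) (fun y hy => by rw [if_neg (show ¬ pj x = y from fun h => hy h.symm)])]
  · simp

lemma fiber_tsum (pj : X → Y) {f : X → ℝ} (h0 : ∀ x, 0 ≤ f x) (hf : Summable f) :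
    Summable (fun y => ∑' x, if pj x = y then f x else 0) ∧
      (∑' y, ∑' x, if pj x = y then f x else 0) = ∑' x, f x := by
  have key : ∑' y, ENNReal.ofReal (∑' x, if pj x = y then f x else 0)
      = ENNReal.ofReal (∑' x, f x) := by
    rw [tsum_congr (ofReal_fiber pj h0 hf), tsum_fiber_ite_ennreal pj,
      ← ENNReal.ofReal_tsum_of_nonneg h0 hf]
  have hnn : ∀ y, 0 ≤ ∑' x, if pj x = y then f x else 0 := fun y =>
    tsum_nonneg (fun x => by split_ifs <;> simp [h0 x])
  have hs : Summable (fun y => ∑' x, if pj x = y then f x else 0) :=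
    summable_of_tsum_ofReal_ne_top hnn (by rw [key]; exact ENNReal.ofReal_ne_top)
  refine ⟨hs, ?_⟩
  have := ENNReal.ofReal_tsum_of_nonneg hnn hs
  rw [key] at this
  exact (ENNReal.ofReal_eq_ofReal_iff (tsum_nonneg hnn) (tsum_nonneg h0)).1 this


/-! ### Convolution basics -/

variable {G : Type*} [Group G]

lemma conv_term_summable {ν μ : G → ℝ} (hν : IsPMF ν) (hμ : IsPMF μ) (g : G) :
    Summable fun h => ν h * μ (h⁻¹ * g) :=
  Summable.of_nonneg_of_le (fun h => mul_nonneg (hν.1 h) (hμ.1 _))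
    (fun h => mul_le_of_le_one_right (hν.1 h) (pmf_le_one hμ _)) (pmf_summable hν)

lemma ofReal_conv {ν μ : G → ℝ} (hν : IsPMF ν) (hμ : IsPMF μ) (g : G) :
    ENNReal.ofReal (conv ν μ g)
      = ∑' h, ENNReal.ofReal (ν h) * ENNReal.ofReal (μ (h⁻¹ * g)) := by
  rw [conv, ENNReal.ofReal_tsum_of_nonneg (fun h => mul_nonneg (hν.1 h) (hμ.1 _))
    (conv_term_summable hν hμ g)]
  exact tsum_congr fun h => ENNReal.ofReal_mul (hν.1 h)

lemma tsum_ofReal_shift {μ : G → ℝ} (hμ : IsPMF μ) (h : G) :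
    ∑' g, ENNReal.ofReal (μ (h⁻¹ * g)) = 1 := by
  have h2 := (Equiv.mulLeft h).tsum_eq (fun g => ENNReal.ofReal (μ (h⁻¹ * g)))
  simp only [Equiv.coe_mulLeft, inv_mul_cancel_left] at h2
  rw [← h2]
  exact pmf_tsum_ofReal hμ

lemma conv_pmf {ν μ : G → ℝ} (hν : IsPMF ν) (hμ : IsPMF μ) : IsPMF (conv ν μ) := by
  have hnn : ∀ g, 0 ≤ conv ν μ g := fun g => tsum_nonneg fun h => mul_nonneg (hν.1 h) (hμ.1 _)
  have hmass : ∑' g, ENNReal.ofReal (conv ν μ g) = 1 := by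
    rw [tsum_congr (ofReal_conv hν hμ), ENNReal.tsum_comm]
    calc ∑' h, ∑' g, ENNReal.ofReal (ν h) * ENNReal.ofReal (μ (h⁻¹ * g))
        = ∑' h, ENNReal.ofReal (ν h) * ∑' g, ENNReal.ofReal (μ (h⁻¹ * g)) :=
          tsum_congr fun h => ENNReal.tsum_mul_left
      _ = ∑' h, ENNReal.ofReal (ν h) := tsum_congr fun h => by
          rw [tsum_ofReal_shift hμ h, mul_one]
      _ = 1 := pmf_tsum_ofReal hν
  have hsum : Summable (conv ν μ) := summable_of_tsum_ofReal_ne_top hnn (by rw [hmass]; simp)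
  refine ⟨hnn, ?_⟩
  have h3 := ENNReal.ofReal_tsum_of_nonneg hnn hsum
  rw [hmass] at h3
  exact (ENNReal.ofReal_eq_ofReal_iff (tsum_nonneg hnn) zero_le_one).1
    (by rw [h3, ENNReal.ofReal_one])

lemma convPow_pmf {μ : G → ℝ} (hμ : IsPMF μ) : ∀ n, IsPMF (convPow μ n)
  | 0 => ⟨fun g => by dsimp [convPow]; split_ifs <;> norm_num,
      by dsimp [convPow]; exact tsum_ite_eq 1 (fun _ => (1 : ℝ))⟩
  | n + 1 => conv_pmf (convPow_pmf hμ n) hμ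

/-! ### The walk representation -/

def prodFn : ∀ {n : ℕ}, (Fin n → G) → G
  | 0, _ => 1
  | n + 1, x => prodFn (Fin.init x) * x (Fin.last n)

lemma prodFn_snoc {n : ℕ} (x : Fin n → G) (g : G) :
    prodFn (Fin.snoc x g) = prodFn x * g := by
  simp [prodFn, Fin.init_snoc, Fin.snoc_last]

def snocEquiv (n : ℕ) : ((Fin n → G) × G) ≃ (Fin (n + 1) → G) where
  toFun p := Fin.snoc p.1 p.2
  invFun z := (Fin.init z, z (Fin.last n))
  left_inv p := by simp
  right_inv z := by simp

lemma prodFn_snocEquiv {n : ℕ} (z : (Fin n → G) × G) :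
    prodFn (snocEquiv n z) = prodFn z.1 * z.2 := prodFn_snoc z.1 z.2

lemma prod_comp_snocEquiv {M : Type*} [CommMonoid M] {n : ℕ} (φ : G → M)
    (z : (Fin n → G) × G) :
    ∏ i, φ (snocEquiv n z i) = (∏ i, φ (z.1 i)) * φ z.2 := by
  show ∏ i, φ ((Fin.snoc z.1 z.2 : Fin (n+1) → G) i) = _
  rw [Fin.prod_univ_castSucc]
  simp

lemma ofReal_convPow_rep {μ : G → ℝ} (hμ : IsPMF μ) :
    ∀ (n : ℕ) (y : G), ENNReal.ofReal (convPow μ n y)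
      = ∑' x : Fin n → G, if prodFn x = y then ∏ i, ENNReal.ofReal (μ (x i)) else 0
  | 0, y => by
    rw [tsum_eq_single (default : Fin 0 → G) (fun b hb => absurd (Subsingleton.elim b default) hb)]
    have h1 : prodFn (default : Fin 0 → G) = 1 := rfl
    dsimp [convPow]
    rw [h1]
    by_cases hy : y = 1 <;> simp [hy, eq_comm]
  | n + 1, y => by
    have hrep := ofReal_convPow_rep hμ n
    have hpmf := convPow_pmf hμ n
    have hstep : convPow μ (n + 1) = conv (convPow μ n) μ := rfl
    rw [hstep, ofReal_conv hpmf hμ y]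
    calc ∑' h, ENNReal.ofReal (convPow μ n h) * ENNReal.ofReal (μ (h⁻¹ * y))
        = ∑' (h) (x : Fin n → G), (if prodFn x = h then ∏ i, ENNReal.ofReal (μ (x i)) else 0)
            * ENNReal.ofReal (μ (h⁻¹ * y)) := by
          refine tsum_congr fun h => ?_
          rw [hrep h, ENNReal.tsum_mul_right]
      _ = ∑' (h) (x : Fin n → G), (if prodFn x = h then
            (∏ i, ENNReal.ofReal (μ (x i))) * ENNReal.ofReal (μ ((prodFn x)⁻¹ * y)) else 0) := by
          refine tsum_congr fun h => tsum_congr fun x => ?_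
          split_ifs with hc
          · rw [hc]
          · rw [zero_mul]
      _ = ∑' x : Fin n → G,
            (∏ i, ENNReal.ofReal (μ (x i))) * ENNReal.ofReal (μ ((prodFn x)⁻¹ * y)) := by
          rw [ENNReal.tsum_comm]
          refine tsum_congr fun x => ?_
          rw [tsum_eq_single (prodFn x) (fun h hh => if_neg fun hc => hh hc.symm), if_pos rfl]
      _ = ∑' (x : Fin n → G) (g : G), (if prodFn x * g = y then
            (∏ i, ENNReal.ofReal (μ (x i))) * ENNReal.ofReal (μ g) else 0) := by
          refine tsum_congr fun x => ?_
          rw [tsum_eq_single ((prodFn x)⁻¹ * y)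
            (fun g hg => if_neg fun hc => hg (eq_inv_mul_iff_mul_eq.2 hc))]
          rw [if_pos (by rw [mul_inv_cancel_left])]
      _ = ∑' z : (Fin n → G) × G, (if prodFn (snocEquiv n z) = y then
            ∏ i, ENNReal.ofReal (μ (snocEquiv n z i)) else 0) := by
          rw [ENNReal.tsum_prod']
          refine tsum_congr fun x => tsum_congr fun g => ?_
          rw [prodFn_snocEquiv, prod_comp_snocEquiv (fun g => ENNReal.ofReal (μ g))]
      _ = ∑' x : Fin (n + 1) → G, if prodFn x = y then ∏ i, ENNReal.ofReal (μ (x i)) else 0 :=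
          (snocEquiv n).tsum_eq fun z : Fin (n + 1) → G =>
            if prodFn z = y then ∏ i, ENNReal.ofReal (μ (z i)) else 0

lemma tsum_prod_ofReal {μ : G → ℝ} (hμ : IsPMF μ) :
    ∀ n : ℕ, ∑' x : Fin n → G, ∏ i, ENNReal.ofReal (μ (x i)) = 1
  | 0 => by
    rw [tsum_eq_single (default : Fin 0 → G) (fun b hb => absurd (Subsingleton.elim b default) hb)]
    simp
  | n + 1 => by
    rw [← (snocEquiv n).tsum_eq fun z : Fin (n + 1) → G => ∏ i, ENNReal.ofReal (μ (z i))]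
    calc ∑' z : (Fin n → G) × G, ∏ i, ENNReal.ofReal (μ (snocEquiv n z i))
        = ∑' z : (Fin n → G) × G,
            (∏ i, ENNReal.ofReal (μ (z.1 i))) * ENNReal.ofReal (μ z.2) :=
          tsum_congr fun z => prod_comp_snocEquiv (fun g => ENNReal.ofReal (μ g)) z
      _ = ∑' x : Fin n → G, (∏ i, ENNReal.ofReal (μ (x i))) * ∑' g, ENNReal.ofReal (μ g) := by
          rw [ENNReal.tsum_prod']
          refine tsum_congr fun x => ?_
          show ∑' g : G, (∏ i, ENNReal.ofReal (μ (x i))) * ENNReal.ofReal (μ g) = _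
          exact ENNReal.tsum_mul_left
      _ = 1 := by
          rw [pmf_tsum_ofReal hμ]
          simp [tsum_prod_ofReal hμ n]

lemma prod_pmf {μ : G → ℝ} (hμ : IsPMF μ) (n : ℕ) :
    IsPMF (fun x : Fin n → G => ∏ i, μ (x i)) := by
  have hnn : ∀ x : Fin n → G, 0 ≤ ∏ i, μ (x i) := fun x => Finset.prod_nonneg fun i _ => hμ.1 _
  have hmass : ∑' x : Fin n → G, ENNReal.ofReal (∏ i, μ (x i)) = 1 := by
    rw [tsum_congr fun x : Fin n → G => ENNReal.ofReal_prod_of_nonneg fun i _ => hμ.1 (x i)]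
    exact tsum_prod_ofReal hμ n
  have hsum : Summable (fun x : Fin n → G => ∏ i, μ (x i)) :=
    summable_of_tsum_ofReal_ne_top hnn (by rw [hmass]; simp)
  refine ⟨hnn, ?_⟩
  have h3 := ENNReal.ofReal_tsum_of_nonneg hnn hsum
  rw [hmass] at h3
  exact (ENNReal.ofReal_eq_ofReal_iff (tsum_nonneg hnn) zero_le_one).1
    (by rw [h3, ENNReal.ofReal_one])

lemma convPow_rep {μ : G → ℝ} (hμ : IsPMF μ) (n : ℕ) (y : G) :
    convPow μ n y = ∑' x : Fin n → G, if prodFn x = y then ∏ i, μ (x i) else 0 := by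
  have hp := prod_pmf hμ n
  have h1 := ofReal_fiber prodFn hp.1 (pmf_summable hp) y
  have h2 : ∑' x : Fin n → G, (if prodFn x = y then ENNReal.ofReal (∏ i, μ (x i)) else 0)
      = ENNReal.ofReal (convPow μ n y) := by
    rw [ofReal_convPow_rep hμ n y]
    exact tsum_congr fun x => by
      rw [ENNReal.ofReal_prod_of_nonneg fun i _ => hμ.1 (x i)]
  rw [h2] at h1
  exact (ENNReal.ofReal_eq_ofReal_iff ((convPow_pmf hμ n).1 y)
    (tsum_nonneg fun x => by split_ifs <;> simp [hp.1 x])).1 h1.symm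


/-! ### Entropy of product measures -/

lemma prod_le_one' {μ : G → ℝ} (hμ : IsPMF μ) {n : ℕ} (x : Fin n → G) : ∏ i, μ (x i) ≤ 1 :=
  Finset.prod_le_one (fun i _ => hμ.1 _) (fun i _ => pmf_le_one hμ _)

lemma ent_prod {μ : G → ℝ} (hμ : IsPMF μ) (hH : Summable fun g => negMulLog (μ g)) :
    ∀ n : ℕ, Summable (fun x : Fin n → G => negMulLog (∏ i, μ (x i))) ∧
      ∑' x : Fin n → G, negMulLog (∏ i, μ (x i)) = n * Hent μ
  | 0 => by
    refine ⟨Summable.of_finite, ?_⟩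
    rw [tsum_eq_single (default : Fin 0 → G)
      (fun b hb => absurd (Subsingleton.elim b default) hb)]
    simp
  | n + 1 => by
    obtain ⟨hs, hsum⟩ := ent_prod hμ hH n
    have hp := prod_pmf hμ n
    have h1 : Summable fun z : (Fin n → G) × G =>
        negMulLog (∏ i, μ (z.1 i)) * μ z.2 :=
      hs.mul_of_nonneg (pmf_summable hμ)
        (fun x => negMulLog_nonneg (hp.1 x) (prod_le_one' hμ x)) hμ.1
    have h2 : Summable fun z : (Fin n → G) × G => (∏ i, μ (z.1 i)) * negMulLog (μ z.2) :=
      (pmf_summable hp).mul_of_nonneg hH hp.1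
        (fun g => negMulLog_nonneg (hμ.1 g) (pmf_le_one hμ g))
    have hkey : ∀ z : (Fin n → G) × G,
        negMulLog (∏ i, μ (snocEquiv n z i))
          = negMulLog (∏ i, μ (z.1 i)) * μ z.2 + (∏ i, μ (z.1 i)) * negMulLog (μ z.2) := by
      intro z
      rw [prod_comp_snocEquiv μ z, negMulLog_mul]
      ring
    have hsum2 : Summable fun z : (Fin n → G) × G => negMulLog (∏ i, μ (snocEquiv n z i)) :=
      (h1.add h2).congr fun z => (hkey z).symm
    have hts : ∑' z : (Fin n → G) × G, negMulLog (∏ i, μ (snocEquiv n z i))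
        = (n + 1 : ℕ) * Hent μ := by
      rw [tsum_congr hkey, Summable.tsum_add h1 h2]
      have e1 : ∑' z : (Fin n → G) × G, negMulLog (∏ i, μ (z.1 i)) * μ z.2
          = (∑' x : Fin n → G, negMulLog (∏ i, μ (x i))) * ∑' g, μ g :=
        (Summable.tsum_mul_tsum hs (pmf_summable hμ) h1).symm
      have e2 : ∑' z : (Fin n → G) × G, (∏ i, μ (z.1 i)) * negMulLog (μ z.2)
          = (∑' x : Fin n → G, ∏ i, μ (x i)) * ∑' g, negMulLog (μ g) :=
        (Summable.tsum_mul_tsum (pmf_summable hp) hH h2).symm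
      rw [e1, e2, hμ.2, hp.2, hsum]
      show (n : ℝ) * Hent μ * 1 + 1 * Hent μ = _
      push_cast
      ring
    refine ⟨((snocEquiv n).summable_iff
      (f := fun x : Fin (n + 1) → G => negMulLog (∏ i, μ (x i)))).1 hsum2, ?_⟩
    rw [← (snocEquiv n).tsum_eq fun x : Fin (n + 1) → G => negMulLog (∏ i, μ (x i))]
    exact hts


/-! ### Entropy decomposition over fibers -/

section Fibers

variable {X Y : Type*} (pj : X → Y)

omit [Group G] in
lemma fib_nonneg {p : X → ℝ} (hp : IsPMF p) (y : Y) :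
    0 ≤ ∑' x, (if pj x = y then p x else 0) :=
  tsum_nonneg fun x => by split_ifs <;> simp [hp.1 x]

omit [Group G] in
lemma fib_le_one {p : X → ℝ} (hp : IsPMF p) (y : Y) :
    ∑' x, (if pj x = y then p x else 0) ≤ 1 := by
  have h := Summable.tsum_le_tsum (f := fun x => if pj x = y then p x else 0) (g := p)
    (fun x => by split_ifs <;> simp [hp.1 x])
    (summable_fiber_ite pj hp.1 (pmf_summable hp) y) (pmf_summable hp)
  rwa [hp.2] at h

omit [Group G] in
lemma le_fib {p : X → ℝ} (hp : IsPMF p) (x : X) :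
    p x ≤ ∑' x', (if pj x' = pj x then p x' else 0) := by
  have h := Summable.le_tsum (summable_fiber_ite pj hp.1 (pmf_summable hp) (pj x)) x
    (fun b _ => by split_ifs <;> simp [hp.1 b])
  simpa using h

omit [Group G] in
lemma W_nonneg {p : X → ℝ} (hp : IsPMF p) (x : X) :
    0 ≤ p x * (-Real.log (∑' x', if pj x' = pj x then p x' else 0)) :=
  mul_nonneg (hp.1 x)
    (neg_nonneg.2 (Real.log_nonpos (fib_nonneg pj hp _) (fib_le_one pj hp _)))

omit [Group G] in
lemma W_le {p : X → ℝ} (hp : IsPMF p) (x : X) :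
    p x * (-Real.log (∑' x', if pj x' = pj x then p x' else 0)) ≤ negMulLog (p x) := by
  rcases eq_or_lt_of_le (hp.1 x) with h0 | h0
  · rw [← h0]
    simp [negMulLog]
  · have hlog : Real.log (p x) ≤ Real.log (∑' x', if pj x' = pj x then p x' else 0) :=
      Real.log_le_log h0 (le_fib pj hp x)
    calc p x * (-Real.log (∑' x', if pj x' = pj x then p x' else 0))
        ≤ p x * (-Real.log (p x)) :=
          mul_le_mul_of_nonneg_left (neg_le_neg hlog) (hp.1 x)
      _ = negMulLog (p x) := by rw [negMulLog]; ring

omit [Group G] in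
lemma W_summable {p : X → ℝ} (hp : IsPMF p)
    (hH : Summable fun x => negMulLog (p x)) :
    Summable fun x => p x * (-Real.log (∑' x', if pj x' = pj x then p x' else 0)) :=
  Summable.of_nonneg_of_le (W_nonneg pj hp) (W_le pj hp) hH

omit [Group G] in
lemma ent_decomp {p : X → ℝ} (hp : IsPMF p)
    (hH : Summable fun x => negMulLog (p x)) :
    Summable (fun y => negMulLog (∑' x, if pj x = y then p x else 0)) ∧
      ∑' y, negMulLog (∑' x, if pj x = y then p x else 0)
        = ∑' x, p x * (-Real.log (∑' x', if pj x' = pj x then p x' else 0)) := by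
  have hW0 := W_nonneg pj hp
  have hWsum := W_summable pj hp hH
  have hfib : ∀ y, negMulLog (∑' x, if pj x = y then p x else 0)
      = ∑' x, if pj x = y then
          p x * (-Real.log (∑' x', if pj x' = pj x then p x' else 0)) else 0 := by
    intro y
    have h1 : negMulLog (∑' x, if pj x = y then p x else 0)
        = (∑' x, if pj x = y then p x else 0)
            * (-Real.log (∑' x, if pj x = y then p x else 0)) := by
      rw [negMulLog]; ring
    rw [h1, ← tsum_mul_right]
    refine tsum_congr fun x => ?_
    split_ifs with hc
    · rw [hc]
    · rw [zero_mul]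
  obtain ⟨hs, hsum⟩ := fiber_tsum pj hW0 hWsum
  exact ⟨hs.congr fun y => (hfib y).symm, by rw [tsum_congr hfib]; exact hsum⟩

end Fibers


/-! ### Main convergence lemma -/

section MainLemma

variable {X Y : Type*}

omit [Group G] in
lemma main_convergence (pj : X → Y) (p : X → ℝ) (pk : ℕ → X → ℝ)
    (hp : IsPMF p) (hpk : ∀ k, IsPMF (pk k))
    (hH : Summable fun x => negMulLog (p x)) (hHk : ∀ k, Summable fun x => negMulLog (pk k x))
    (hpt : ∀ x, Tendsto (fun k => pk k x) atTop (nhds (p x)))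
    (hHt : Tendsto (fun k => ∑' x, negMulLog (pk k x)) atTop
      (nhds (∑' x, negMulLog (p x)))) :
    (∀ y, Tendsto (fun k => ∑' x, if pj x = y then pk k x else 0) atTop
        (nhds (∑' x, if pj x = y then p x else 0))) ∧
      Tendsto (fun k => ∑' y, negMulLog (∑' x, if pj x = y then pk k x else 0)) atTop
        (nhds (∑' y, negMulLog (∑' x, if pj x = y then p x else 0))) := by
  -- Scheffé: total variation convergence
  have hmin_s : ∀ k, Summable fun x => min (pk k x) (p x) := fun k =>
    Summable.of_nonneg_of_le (fun x => le_min ((hpk k).1 x) (hp.1 x))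
      (fun x => min_le_right _ _) (pmf_summable hp)
  have hminT : Tendsto (fun k => ∑' x, min (pk k x) (p x)) atTop (nhds 1) := by
    have h := tendsto_tsum_of_dominated_convergence (𝓕 := atTop)
      (f := fun k x => min (pk k x) (p x)) (g := p) (bound := p) (pmf_summable hp)
      (fun x => by
        simpa [min_self] using ((hpt x).min
          (tendsto_const_nhds : Tendsto (fun _ : ℕ => p x) atTop (nhds (p x)))))
      (Eventually.of_forall fun k x => by
        rw [Real.norm_eq_abs, abs_of_nonneg (le_min ((hpk k).1 x) (hp.1 x))]
        exact min_le_right _ _)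
    rwa [hp.2] at h
  have habs_le : ∀ k x, |pk k x - p x| ≤ pk k x + p x := by
    intro k x
    rcases le_total (pk k x) (p x) with h | h
    · rw [abs_of_nonpos (by linarith)]
      have := (hpk k).1 x; linarith
    · rw [abs_of_nonneg (by linarith)]
      have := hp.1 x; linarith
  have habs_s : ∀ k, Summable fun x => |pk k x - p x| := fun k =>
    Summable.of_nonneg_of_le (fun x => abs_nonneg _) (habs_le k)
      ((pmf_summable (hpk k)).add (pmf_summable hp))
  have habs_eq : ∀ k x, |pk k x - p x| = pk k x + p x - 2 * min (pk k x) (p x) := by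
    intro k x
    rcases le_total (pk k x) (p x) with h | h
    · rw [abs_of_nonpos (by linarith), min_eq_left h]; ring
    · rw [abs_of_nonneg (by linarith), min_eq_right h]; ring
  have hTT : Tendsto (fun k => ∑' x, |pk k x - p x|) atTop (nhds 0) := by
    have hsums : ∀ k, ∑' x, |pk k x - p x| = 2 - 2 * ∑' x, min (pk k x) (p x) := by
      intro k
      calc ∑' x, |pk k x - p x|
          = ∑' x, (pk k x + p x - 2 * min (pk k x) (p x)) := tsum_congr (habs_eq k)
        _ = (∑' x, (pk k x + p x)) - ∑' x, 2 * min (pk k x) (p x) :=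
            Summable.tsum_sub ((pmf_summable (hpk k)).add (pmf_summable hp)) ((hmin_s k).mul_left 2)
        _ = ((∑' x, pk k x) + ∑' x, p x) - 2 * ∑' x, min (pk k x) (p x) := by
            rw [Summable.tsum_add (pmf_summable (hpk k)) (pmf_summable hp),
              Summable.tsum_mul_left 2 (hmin_s k)]
        _ = 2 - 2 * ∑' x, min (pk k x) (p x) := by rw [(hpk k).2, hp.2]; ring
    have h2 : Tendsto (fun k => 2 - 2 * ∑' x, min (pk k x) (p x)) atTop
        (nhds (2 - 2 * 1)) := tendsto_const_nhds.sub (hminT.const_mul 2)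
    norm_num at h2
    exact h2.congr fun k => (hsums k).symm
  -- pointwise convergence of the fiber sums
  have hfib_t : ∀ y, Tendsto (fun k => ∑' x, if pj x = y then pk k x else 0) atTop
      (nhds (∑' x, if pj x = y then p x else 0)) := by
    intro y
    have hbound : ∀ k, |(∑' x, if pj x = y then pk k x else 0)
        - ∑' x, if pj x = y then p x else 0| ≤ ∑' x, |pk k x - p x| := by
      intro k
      have hs1 := summable_fiber_ite pj (hpk k).1 (pmf_summable (hpk k)) y
      have hs2 := summable_fiber_ite pj hp.1 (pmf_summable hp) y
      rw [← Summable.tsum_sub hs1 hs2]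
      have hdiff_s : Summable fun x => |(if pj x = y then pk k x else 0)
          - if pj x = y then p x else 0| := by
        refine Summable.of_nonneg_of_le (fun x => abs_nonneg _) (fun x => ?_) (habs_s k)
        split_ifs with hc
        · exact le_rfl
        · simpa using abs_nonneg (pk k x - p x)
      calc |∑' x, ((if pj x = y then pk k x else 0) - if pj x = y then p x else 0)|
          ≤ ∑' x, |(if pj x = y then pk k x else 0) - if pj x = y then p x else 0| := by
            have hn := norm_tsum_le_tsum_norm
              (f := fun x => (if pj x = y then pk k x else 0) - if pj x = y then p x else 0)
              (by simpa [Real.norm_eq_abs] using hdiff_s)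
            simpa [Real.norm_eq_abs] using hn
        _ ≤ ∑' x, |pk k x - p x| := by
            refine Summable.tsum_le_tsum (fun x => ?_) hdiff_s (habs_s k)
            split_ifs with hc
            · exact le_rfl
            · simpa using abs_nonneg (pk k x - p x)
    rw [tendsto_iff_dist_tendsto_zero]
    refine squeeze_zero (fun k => dist_nonneg) (fun k => ?_) hTT
    rw [Real.dist_eq]
    exact hbound k
  refine ⟨hfib_t, ?_⟩
  -- entropy decompositions
  obtain ⟨hνs, hνe⟩ := ent_decomp pj hp hH
  have hνks : ∀ k, Summable (fun y => negMulLog (∑' x, if pj x = y then pk k x else 0)) :=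
    fun k => (ent_decomp pj (hpk k) (hHk k)).1
  have hνke := fun k => (ent_decomp pj (hpk k) (hHk k)).2
  set Df : X → ℝ := fun x =>
    negMulLog (p x) - p x * (-Real.log (∑' x', if pj x' = pj x then p x' else 0)) with hDf
  set Dfk : ℕ → X → ℝ := fun k x =>
    negMulLog (pk k x)
      - pk k x * (-Real.log (∑' x', if pj x' = pj x then pk k x' else 0)) with hDfk
  have hDf0 : ∀ x, 0 ≤ Df x := fun x => sub_nonneg.2 (W_le pj hp x)
  have hDfk0 : ∀ k x, 0 ≤ Dfk k x := fun k x => sub_nonneg.2 (W_le pj (hpk k) x)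
  have hDfle : ∀ k x, Dfk k x ≤ negMulLog (pk k x) := fun k x => by
    have h := W_nonneg pj (hpk k) x
    simp only [hDfk]
    linarith
  have hDfsum : Summable Df := hH.sub (W_summable pj hp hH)
  have hDfksum : ∀ k, Summable (Dfk k) := fun k =>
    (hHk k).sub (W_summable pj (hpk k) (hHk k))
  have hDsum_eq : ∑' x, Df x = (∑' x, negMulLog (p x))
      - ∑' y, negMulLog (∑' x, if pj x = y then p x else 0) := by
    rw [hνe]
    exact Summable.tsum_sub hH (W_summable pj hp hH)
  have hDksum_eq : ∀ k, ∑' x, Dfk k x = (∑' x, negMulLog (pk k x))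
      - ∑' y, negMulLog (∑' x, if pj x = y then pk k x else 0) := by
    intro k
    rw [hνke k]
    exact Summable.tsum_sub (hHk k) (W_summable pj (hpk k) (hHk k))
  -- pointwise convergence of the relative-entropy terms
  have hDft : ∀ x, Tendsto (fun k => Dfk k x) atTop (nhds (Df x)) := by
    intro x
    rcases eq_or_lt_of_le (hp.1 x) with h0 | h0
    · have hDfx : Df x = 0 := by simp [hDf, ← h0]
      rw [hDfx]
      have hml : Tendsto (fun k => negMulLog (pk k x)) atTop (nhds 0) := by
        have h := (continuous_negMulLog.tendsto (p x)).comp (hpt x)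
        rwa [← h0, negMulLog_zero] at h
      exact squeeze_zero (fun k => hDfk0 k x) (fun k => hDfle k x) hml
    · have hν_pos : 0 < ∑' x', if pj x' = pj x then p x' else 0 :=
        lt_of_lt_of_le h0 (le_fib pj hp x)
      have hlogt : Tendsto (fun k => Real.log (∑' x', if pj x' = pj x then pk k x' else 0))
          atTop (nhds (Real.log (∑' x', if pj x' = pj x then p x' else 0))) :=
        ((Real.continuousAt_log hν_pos.ne').tendsto).comp (hfib_t (pj x))
      have h1 : Tendsto (fun k => negMulLog (pk k x)) atTop (nhds (negMulLog (p x))) :=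
        (continuous_negMulLog.tendsto (p x)).comp (hpt x)
      exact h1.sub ((hpt x).mul hlogt.neg)
  -- convergence of the relative entropies
  set D : ℝ := ∑' x, Df x with hD
  have hDt : Tendsto (fun k => ∑' x, Dfk k x) atTop (nhds D) := by
    rw [tendsto_order]
    constructor
    · intro b hb
      obtain ⟨F, hF⟩ := (hDfsum.hasSum.eventually (eventually_gt_nhds hb)).exists
      have hFt : Tendsto (fun k => ∑ x ∈ F, Dfk k x) atTop (nhds (∑ x ∈ F, Df x)) :=
        tendsto_finset_sum F fun x _ => hDft x
      filter_upwards [hFt.eventually (eventually_gt_nhds hF)] with k hk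
      exact hk.trans_le (Summable.sum_le_tsum F (fun x _ => hDfk0 k x) (hDfksum k))
    · intro b hb
      have hDval : D = (∑' x, negMulLog (p x))
          - ∑' y, negMulLog (∑' x, if pj x = y then p x else 0) := hDsum_eq
      have hεpos : 0 < (b - D) / 3 := by linarith
      obtain ⟨F, hF⟩ := (hνs.hasSum.eventually (eventually_gt_nhds
        (show (∑' y, negMulLog (∑' x, if pj x = y then p x else 0)) - (b - D) / 3
            < ∑' y, negMulLog (∑' x, if pj x = y then p x else 0) by linarith))).exists
      have hFt : Tendsto
          (fun k => ∑ y ∈ F, negMulLog (∑' x, if pj x = y then pk k x else 0)) atTop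
          (nhds (∑ y ∈ F, negMulLog (∑' x, if pj x = y then p x else 0))) :=
        tendsto_finset_sum F fun y _ => (continuous_negMulLog.tendsto _).comp (hfib_t y)
      filter_upwards [hFt.eventually (eventually_gt_nhds hF),
        hHt.eventually (eventually_lt_nhds
          (show (∑' x, negMulLog (p x)) < (∑' x, negMulLog (p x)) + (b - D) / 3
            by linarith))] with k hk1 hk2
      have hsum_le : ∑ y ∈ F, negMulLog (∑' x, if pj x = y then pk k x else 0)
          ≤ ∑' y, negMulLog (∑' x, if pj x = y then pk k x else 0) :=
        Summable.sum_le_tsum F (fun y _ => negMulLog_nonneg (fib_nonneg pj (hpk k) y)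
          (fib_le_one pj (hpk k) y)) (hνks k)
      rw [hDksum_eq k]
      linarith
  have hfin : ∀ k, ∑' y, negMulLog (∑' x, if pj x = y then pk k x else 0)
      = (∑' x, negMulLog (pk k x)) - ∑' x, Dfk k x := by
    intro k
    rw [hDksum_eq k]
    ring
  have hlim : Tendsto (fun k => (∑' x, negMulLog (pk k x)) - ∑' x, Dfk k x) atTop
      (nhds ((∑' x, negMulLog (p x)) - D)) := hHt.sub hDt
  have hgoal : (∑' y, negMulLog (∑' x, if pj x = y then p x else 0))
      = (∑' x, negMulLog (p x)) - D := by
    rw [hDsum_eq]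
    ring
  rw [hgoal]
  exact hlim.congr fun k => (hfin k).symm

end MainLemma

end Stmt19Aux

open Stmt19Aux in
/-- Pointwise convergence of probability measures with convergence of finite
entropies passes to every fixed convolution power. -/
theorem stmt19 {G : Type*} [Group G] [Countable G] (μ : G → ℝ) (μk : ℕ → G → ℝ)
    (hμ : IsPMF μ) (hμk : ∀ k, IsPMF (μk k))
    (hHμ : Summable (fun g => Real.negMulLog (μ g)))
    (hHμk : ∀ k, Summable (fun g => Real.negMulLog (μk k g)))
    (hconv : ∀ g : G, Tendsto (fun k => μk k g) atTop (nhds (μ g)))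
    (hHconv : Tendsto (fun k => Hent (μk k)) atTop (nhds (Hent μ))) :
    ∀ n : ℕ, 1 ≤ n →
      (∀ g : G, Tendsto (fun k => convPow (μk k) n g) atTop (nhds (convPow μ n g))) ∧
        Tendsto (fun k => Hent (convPow (μk k) n)) atTop (nhds (Hent (convPow μ n))) := by
  intro n _
  have hp := prod_pmf hμ n
  have hpk : ∀ k, IsPMF (fun x : Fin n → G => ∏ i, μk k (x i)) := fun k => prod_pmf (hμk k) n
  have hHp := (ent_prod hμ hHμ n).1
  have hHpk := fun k => (ent_prod (hμk k) (hHμk k) n).1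
  have hpt : ∀ x : Fin n → G,
      Tendsto (fun k => ∏ i, μk k (x i)) atTop (nhds (∏ i, μ (x i))) :=
    fun x => tendsto_finset_prod _ fun i _ => hconv (x i)
  have hHt : Tendsto (fun k => ∑' x : Fin n → G, negMulLog (∏ i, μk k (x i))) atTop
      (nhds (∑' x : Fin n → G, negMulLog (∏ i, μ (x i)))) := by
    rw [(ent_prod hμ hHμ n).2]
    have h2 : Tendsto (fun k => (n : ℝ) * Hent (μk k)) atTop (nhds ((n : ℝ) * Hent μ)) :=
      hHconv.const_mul (n : ℝ)
    exact h2.congr fun k => ((ent_prod (hμk k) (hHμk k) n).2).symm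
  obtain ⟨h1, h2⟩ := main_convergence prodFn (fun x : Fin n → G => ∏ i, μ (x i))
    (fun k (x : Fin n → G) => ∏ i, μk k (x i)) hp hpk hHp hHpk hpt hHt
  constructor
  · intro g
    rw [convPow_rep hμ n g]
    exact (h1 g).congr fun k => (convPow_rep (hμk k) n g).symm
  · have eμ : Hent (convPow μ n)
        = ∑' y, negMulLog (∑' x : Fin n → G, if prodFn x = y then ∏ i, μ (x i) else 0) :=
      tsum_congr fun y => by rw [convPow_rep hμ n y]
    have eμk : ∀ k, Hent (convPow (μk k) n)
        = ∑' y, negMulLog (∑' x : Fin n → G, if prodFn x = y then ∏ i, μk k (x i) else 0) :=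
      fun k => tsum_congr fun y => by rw [convPow_rep (hμk k) n y]
    rw [eμ]
    exact h2.congr fun k => (eμk k).symm
end
end
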